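/- arXiv:1411.2652 — 4 statements merged into one kernel-verified Lean document; each statement's English description precedes it below -/
import Mathlib

section
/- Let n ≥ 2, let C be a crumpled n-cube, let Bⁿ denote the closed unit ball in ℝⁿ with boundary sphere S^{n−1}, and let h : Bd C → S^{n−1} be any homeomorphism. Then there exists a continuous map f : C → Bⁿ with f|_{Bd C} = h and f⁻¹(S^{n−1}) = Bd C; in particular (C, Bⁿ, h) ∈ W_n. (Theorem 3.1) -/
noncomputable section

open Metric Set unitInterval

/-- The ambient Euclidean space `ℝ^{n+1}` in which the sphere `S^n` lives. -/
abbrev Amb (n : ℕ) := EuclideanSpace ℝ (Fin (n + 1))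

/-- The unit sphere `S^n` inside `ℝ^{n+1}`. -/
def Sph (n : ℕ) : Set (Amb n) := Metric.sphere 0 1

/-- A crumpled `n`-cube: the union of the image `bd` of a topological embedding of the
sphere `S^{n-1}` into `S^n` together with one of the connected components `int` of
`S^n \ bd`. -/
structure CrumpledCube (n : ℕ) where
  bd : Set (Amb n)
  int : Set (Amb n)
  bd_subset_sphere : bd ⊆ Sph n
  exists_embedding : ∃ e : ↥(Sph (n - 1)) → Amb n,
      Continuous e ∧ Function.Injective e ∧ Set.range e = bd
  int_component : ∃ x, x ∈ Sph n \ bd ∧ int = connectedComponentIn (Sph n \ bd) x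

namespace CrumpledCube

/-- The underlying set of a crumpled cube. -/
def carrier {n : ℕ} (C : CrumpledCube n) : Set (Amb n) := C.bd ∪ C.int

lemma bd_subset_carrier {n : ℕ} (C : CrumpledCube n) : C.bd ⊆ C.carrier :=
  Set.subset_union_left

end CrumpledCube

/-- `f : C → D` is a map associated with the triple `(C, D, h)`: it is continuous,
restricts to `h` on `Bd C`, and satisfies `f⁻¹(Bd D) = Bd C`. -/
def IsAssociatedMap {n : ℕ} (C D : CrumpledCube n) (h : ↥C.bd ≃ₜ ↥D.bd)
    (f : ↥C.carrier → ↥D.carrier) : Prop :=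
  Continuous f ∧
    (∀ (x : ↥C.carrier) (hx : (x : Amb n) ∈ C.bd),
      ((f x : ↥D.carrier) : Amb n) = ((h ⟨(x : Amb n), hx⟩ : ↥D.bd) : Amb n)) ∧
    (∀ x : ↥C.carrier, ((f x : ↥D.carrier) : Amb n) ∈ D.bd ↔ (x : Amb n) ∈ C.bd)

/-- The triple `(C, D, h)` belongs to the collection `𝒲_n`. -/
def MemW {n : ℕ} (C D : CrumpledCube n) (h : ↥C.bd ≃ₜ ↥D.bd) : Prop :=
  ∃ f : ↥C.carrier → ↥D.carrier, IsAssociatedMap C D h f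

/-- The image `h(T)` of a subset `T` of `Bd C` under a boundary homeomorphism
`h : Bd C → Bd D`, as a subset of the ambient space. -/
def bdImage {n : ℕ} {C D : CrumpledCube n} (h : ↥C.bd ≃ₜ ↥D.bd) (T : Set (Amb n)) :
    Set (Amb n) :=
  (fun x : ↥C.bd => ((h x : ↥D.bd) : Amb n)) '' {x : ↥C.bd | (x : Amb n) ∈ T}

/-- `T` is a homotopy taming set for the crumpled cube `C`. -/
def IsHomotopyTamingSet {n : ℕ} (C : CrumpledCube n) (T : Set (Amb n)) : Prop :=
  T ⊆ C.bd ∧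
    ∀ (m : C(I × I, ↥C.carrier)) (ε : ℝ), 0 < ε →
      ∃ m' : C(I × I, ↥C.carrier),
        (∀ x, dist (m x) (m' x) < ε) ∧ ∀ x, ((m' x : ↥C.carrier) : Amb n) ∈ T ∪ C.int

/-- `Bd C` is locally collared in `C` at the point `p`. -/
def LocallyCollaredAt {n : ℕ} (C : CrumpledCube n) (p : ↥C.carrier) : Prop :=
  ∃ N : Set ↥C.carrier, IsOpen N ∧ p ∈ N ∧
    ∃ φ : ↥N ≃ₜ ↥(N ∩ {x : ↥C.carrier | (x : Amb n) ∈ C.bd}) × ↥(Set.Ico (0 : ℝ) 1),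
      ∀ (x : ↥N) (hx : ((x : ↥C.carrier) : Amb n) ∈ C.bd),
        φ x = (⟨(x : ↥C.carrier), ⟨x.2, hx⟩⟩, ⟨0, ⟨le_rfl, zero_lt_one⟩⟩)

/-- The wild set of a crumpled cube: the points of `Bd C` at which `Bd C` fails to be
locally collared in `C`. -/
def wildSet {n : ℕ} (C : CrumpledCube n) : Set (Amb n) :=
  {p | ∃ hp : p ∈ C.bd, ¬ LocallyCollaredAt C ⟨p, C.bd_subset_carrier hp⟩}

/-- `C` is strictly wilder than `D`. -/
def StrictlyWilder {n : ℕ} (C D : CrumpledCube n) : Prop :=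
  (∃ h : ↥C.bd ≃ₜ ↥D.bd, MemW C D h) ∧ ∀ H : ↥D.bd ≃ₜ ↥C.bd, ¬ MemW D C H

/-- A crumpled `n`-cube is a closed `n`-cell-complement if the complement of its
interior in `S^n` is an `n`-cell. -/
def IsClosedCellComplement {n : ℕ} (C : CrumpledCube n) : Prop :=
  Nonempty (↥(Sph n \ C.int) ≃ₜ ↥(Metric.closedBall (0 : EuclideanSpace ℝ (Fin n)) 1))

/-- **Theorem 3.1.** For every crumpled `n`-cube `C` (`n ≥ 2`) and every homeomorphism
`h : Bd C → S^{n-1} = Bd Bⁿ`, there is a continuous map `f : C → Bⁿ` extending `h`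
with `f⁻¹(S^{n-1}) = Bd C`; that is, `(C, Bⁿ, h) ∈ 𝒲_n`. -/
theorem stmt0 (n : ℕ) (hn : 2 ≤ n) (C : CrumpledCube n)
    (h : ↥C.bd ≃ₜ ↥(Metric.sphere (0 : EuclideanSpace ℝ (Fin n)) 1)) :
    ∃ f : ↥C.carrier → ↥(Metric.closedBall (0 : EuclideanSpace ℝ (Fin n)) 1),
      Continuous f ∧
      (∀ (x : ↥C.carrier) (hx : (x : Amb n) ∈ C.bd),
        ((f x : ↥(Metric.closedBall (0 : EuclideanSpace ℝ (Fin n)) 1)) : EuclideanSpace ℝ (Fin n)) =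
          ((h ⟨(x : Amb n), hx⟩) : EuclideanSpace ℝ (Fin n))) ∧
      (∀ x : ↥C.carrier,
        ((f x : ↥(Metric.closedBall (0 : EuclideanSpace ℝ (Fin n)) 1)) : EuclideanSpace ℝ (Fin n)) ∈
            Metric.sphere (0 : EuclideanSpace ℝ (Fin n)) 1 ↔ (x : Amb n) ∈ C.bd) := by
  classical
  -- bd is compact, hence closed, and nonempty
  obtain ⟨e, he_cont, he_inj, he_range⟩ := C.exists_embedding
  haveI : CompactSpace ↥(Sph (n - 1)) :=
    isCompact_iff_compactSpace.mp (isCompact_sphere (0 : Amb (n-1)) 1)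
  haveI : Nonempty ↥(Sph (n - 1)) := by
    have : (Metric.sphere (0 : Amb (n-1)) 1).Nonempty :=
      NormedSpace.sphere_nonempty.mpr zero_le_one
    exact this.to_subtype
  have hbd_compact : IsCompact C.bd := he_range ▸ isCompact_range he_cont
  have hbd_closed : IsClosed C.bd := hbd_compact.isClosed
  have hbd_ne : C.bd.Nonempty := he_range ▸ Set.range_nonempty e
  -- the bump function φ
  set φ : Amb n → ℝ := fun x => max 0 (1 - Metric.infDist x C.bd) with hφdef
  have hφ_cont : Continuous φ :=
    continuous_const.max (continuous_const.sub (continuous_infDist_pt C.bd))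
  have hφ_nonneg : ∀ x, 0 ≤ φ x := fun x => le_max_left _ _
  have hφ_le : ∀ x, φ x ≤ 1 := by
    intro x
    have := Metric.infDist_nonneg (s := C.bd) (x := x)
    simp only [hφdef]
    rw [max_le_iff]; constructor <;> linarith
  have hφ_eq_one : ∀ x, φ x = 1 ↔ x ∈ C.bd := by
    intro x
    have hd := Metric.infDist_nonneg (s := C.bd) (x := x)
    rw [hbd_closed.mem_iff_infDist_zero hbd_ne]
    constructor
    · intro hx
      rcases max_cases 0 (1 - Metric.infDist x C.bd) with ⟨h1, _⟩ | ⟨h1, _⟩ <;>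
        simp only [hφdef] at hx <;> rw [h1] at hx <;> linarith
    · intro hx; simp [hφdef, hx]
  -- Tietze extension of h into the closed unit ball
  set S : Set ↥C.carrier := {x | (x : Amb n) ∈ C.bd} with hSdef
  have hS_closed : IsClosed S := hbd_closed.preimage continuous_subtype_val
  have hsub : Metric.sphere (0 : EuclideanSpace ℝ (Fin n)) 1 ⊆
      Metric.closedBall (0 : EuclideanSpace ℝ (Fin n)) 1 := Metric.sphere_subset_closedBall
  set f₀ : C(↥S, ↥(Metric.closedBall (0 : EuclideanSpace ℝ (Fin n)) 1)) :=
    ⟨fun x => ⟨(h ⟨(x : ↥C.carrier), x.2⟩ : EuclideanSpace ℝ (Fin n)),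
        hsub (h ⟨(x : ↥C.carrier), x.2⟩).2⟩, by
      refine Continuous.subtype_mk ?_ _
      exact continuous_subtype_val.comp (h.continuous.comp
        (Continuous.subtype_mk (continuous_subtype_val.comp continuous_subtype_val) _))⟩
    with hf₀def
  obtain ⟨G, hG⟩ := f₀.exists_restrict_eq hS_closed
  have hGval : ∀ (x : ↥C.carrier) (hx : (x : Amb n) ∈ C.bd),
      (G x : EuclideanSpace ℝ (Fin n)) = (h ⟨(x : Amb n), hx⟩ : EuclideanSpace ℝ (Fin n)) := by
    intro x hx
    have := congrFun (congrArg DFunLike.coe hG) ⟨x, hx⟩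
    simp only [ContinuousMap.restrict_apply] at this
    rw [this]; rfl
  have hGnorm : ∀ x : ↥C.carrier, ‖(G x : EuclideanSpace ℝ (Fin n))‖ ≤ 1 := by
    intro x
    exact mem_closedBall_zero_iff.mp (G x).2
  -- the map f
  refine ⟨fun x => ⟨φ (x : Amb n) • (G x : EuclideanSpace ℝ (Fin n)), ?_⟩, ?_, ?_, ?_⟩
  · rw [Metric.mem_closedBall, dist_zero_right, norm_smul, Real.norm_eq_abs,
      abs_of_nonneg (hφ_nonneg _)]
    exact mul_le_one₀ (hφ_le _) (norm_nonneg _) (hGnorm x)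
  · refine Continuous.subtype_mk ?_ _
    exact ((hφ_cont.comp continuous_subtype_val).smul
      (continuous_subtype_val.comp G.continuous))
  · intro x hx
    simp only []
    rw [hGval x hx, (hφ_eq_one _).mpr hx, one_smul]
  · intro x
    constructor
    · intro hx
      rw [mem_sphere_zero_iff_norm] at hx
      simp only [norm_smul, Real.norm_eq_abs, abs_of_nonneg (hφ_nonneg _)] at hx
      have h1 := hφ_le (x : Amb n)
      have h2 := hφ_nonneg (x : Amb n)
      have h3 := hGnorm x
      have h4 := norm_nonneg (G x : EuclideanSpace ℝ (Fin n))
      have : φ (x : Amb n) = 1 := by nlinarith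
      exact (hφ_eq_one _).mp this
    · intro hx
      rw [mem_sphere_zero_iff_norm]
      simp only []
      rw [hGval x hx, (hφ_eq_one _).mpr hx, one_smul]
      exact mem_sphere_zero_iff_norm.mp (h ⟨(x : Amb n), hx⟩).2
end
end

section
/- Suppose (C,D,h) ∈ W_n. Then there exist crumpled (n+1)-cubes C′, D′ ⊆ S^{n+1} and homeomorphisms φ : Susp(C) → C′ and ψ : Susp(D) → D′ with φ(Susp(Bd C)) = Bd C′ and ψ(Susp(Bd D)) = Bd D′, such that the triple (C′, D′, h′) belongs to W_{n+1}, where h′ : Bd C′ → Bd D′ is the homeomorphism ψ ∘ Susp(h) ∘ (φ|_{Susp(Bd C)})⁻¹ induced by the suspension Susp(h) of h. (Theorem 4.1) -/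
noncomputable section

open Metric Set unitInterval

/-- The identifications defining the unreduced suspension of `X`. -/
def SuspRel (X : Type*) : X × I → X × I → Prop := fun a b =>
  a = b ∨ (a.2 = 0 ∧ b.2 = 0) ∨ (a.2 = 1 ∧ b.2 = 1)

/-- The unreduced suspension of a topological space. -/
def Susp (X : Type*) : Type _ := Quot (SuspRel X)

instance (X : Type*) [TopologicalSpace X] : TopologicalSpace (Susp X) :=
  inferInstanceAs (TopologicalSpace (Quot (SuspRel X)))

/-- The map induced on unreduced suspensions by a map `f : X → Y`. -/
def Susp.map {X Y : Type*} (f : X → Y) : Susp X → Susp Y :=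
  Quot.map (fun a : X × I => (f a.1, a.2))
    (fun a b hab => by
      rcases hab with h | h | h
      · exact Or.inl (by rw [h])
      · exact Or.inr (Or.inl h)
      · exact Or.inr (Or.inr h))


-- Part A : inc / init / last
def incE {m : ℕ} (x : Amb m) (s : ℝ) : Amb (m+1) :=
  (EuclideanSpace.equiv (Fin (m+2)) ℝ).symm (Fin.snoc (⇑(EuclideanSpace.equiv (Fin (m+1)) ℝ) x) s)

def initE {m : ℕ} (y : Amb (m+1)) : Amb m :=
  (EuclideanSpace.equiv (Fin (m+1)) ℝ).symm (Fin.init (⇑(EuclideanSpace.equiv (Fin (m+2)) ℝ) y))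

def lastE {m : ℕ} (y : Amb (m+1)) : ℝ := y (Fin.last (m+1))

lemma initE_incE {m : ℕ} (x : Amb m) (s : ℝ) : initE (incE x s) = x := by
  simp [initE, incE, Fin.init_snoc]
  ext i
  simp [Fin.init, EuclideanSpace.equiv]

lemma lastE_incE {m : ℕ} (x : Amb m) (s : ℝ) : lastE (incE x s) = s := by
  simp [lastE, incE]

lemma incE_initE_lastE {m : ℕ} (y : Amb (m+1)) : incE (initE y) (lastE y) = y := by
  simp [initE, incE, lastE]
  exact congrArg _ (Fin.snoc_init_self _)

lemma continuous_incE {m : ℕ} : Continuous (fun p : Amb m × ℝ => incE p.1 p.2) := by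
  refine (EuclideanSpace.equiv (Fin (m+2)) ℝ).symm.continuous.comp ?_
  refine continuous_pi fun i => ?_
  refine Fin.lastCases ?_ (fun j => ?_) i
  · simpa [Fin.snoc_last] using continuous_snd
  · simp only [Fin.snoc_castSucc]
    exact (continuous_apply j).comp ((EuclideanSpace.equiv (Fin (m+1)) ℝ).continuous.comp continuous_fst)

lemma continuous_initE {m : ℕ} : Continuous (fun y : Amb (m+1) => initE y) := by
  refine (EuclideanSpace.equiv (Fin (m+1)) ℝ).symm.continuous.comp ?_
  refine continuous_pi fun i => ?_
  exact (continuous_apply _).comp (EuclideanSpace.equiv (Fin (m+2)) ℝ).continuous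

lemma continuous_lastE {m : ℕ} : Continuous (fun y : Amb (m+1) => lastE y) :=
  (EuclideanSpace.proj (Fin.last (m+1)) : Amb (m+1) →L[ℝ] ℝ).continuous

lemma norm_incE_sq {m : ℕ} (x : Amb m) (s : ℝ) : ‖incE x s‖^2 = ‖x‖^2 + s^2 := by
  have h1 : ‖incE x s‖^2 = ∑ i : Fin (m+2), (incE x s i)^2 := by
    rw [EuclideanSpace.norm_eq, Real.sq_sqrt (by positivity)]
    simp [sq_abs]
  have h2 : ‖x‖^2 = ∑ i : Fin (m+1), (x i)^2 := by
    rw [EuclideanSpace.norm_eq, Real.sq_sqrt (by positivity)]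
    simp [sq_abs]
  rw [h1, h2, Fin.sum_univ_castSucc]
  congr 1
  · refine Finset.sum_congr rfl fun i _ => ?_
    show (incE x s) i.castSucc ^ 2 = _
    simp [incE, Fin.snoc_castSucc]
  · show (incE x s) (Fin.last (m+1)) ^2 = _
    simp [incE]

-- Part B : the suspension parametrization
def sg (t : ℝ) : ℝ := 2*t - 1
def cg (t : ℝ) : ℝ := Real.sqrt (1 - (2*t-1)^2)

def Qm {m : ℕ} (x : Amb m) (t : ℝ) : Amb (m+1) := incE (cg t • x) (sg t)

lemma continuous_cg : Continuous cg := by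
  unfold cg
  exact Real.continuous_sqrt.comp (by fun_prop)

lemma continuous_sg : Continuous sg := by unfold sg; fun_prop

lemma continuous_Qm {m : ℕ} : Continuous (fun p : Amb m × ℝ => Qm p.1 p.2) := by
  refine continuous_incE.comp (Continuous.prodMk ?_ (continuous_sg.comp continuous_snd))
  exact Continuous.smul (continuous_cg.comp continuous_snd) continuous_fst

lemma lastE_Qm {m : ℕ} (x : Amb m) (t : ℝ) : lastE (Qm x t) = sg t := lastE_incE _ _
lemma initE_Qm {m : ℕ} (x : Amb m) (t : ℝ) : initE (Qm x t) = cg t • x := initE_incE _ _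

lemma sg_mem (t : ℝ) (ht : t ∈ Icc (0:ℝ) 1) : sg t ∈ Icc (-1:ℝ) 1 := by
  constructor <;> simp [sg] <;> linarith [ht.1, ht.2]

lemma cg_sq (t : ℝ) (ht : t ∈ Icc (0:ℝ) 1) : (cg t)^2 = 1 - (sg t)^2 := by
  have h2 : (2*t-1)^2 ≤ 1 := by nlinarith [ht.1, ht.2]
  rw [cg, sg, Real.sq_sqrt (by nlinarith)]

lemma cg_nonneg (t : ℝ) : 0 ≤ cg t := Real.sqrt_nonneg _

lemma cg_pos (t : ℝ) (ht : t ∈ Ioo (0:ℝ) 1) : 0 < cg t := by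
  apply Real.sqrt_pos.2
  nlinarith [ht.1, ht.2]

lemma cg_zero : cg 0 = 0 := by norm_num [cg]
lemma cg_one : cg 1 = 0 := by norm_num [cg]

lemma Qm_mem_sph {m : ℕ} (x : Amb m) (hx : x ∈ Sph m) (t : ℝ) (ht : t ∈ Icc (0:ℝ) 1) :
    Qm x t ∈ Sph (m+1) := by
  have hx' : ‖x‖ = 1 := by simpa [Sph] using hx
  have : ‖Qm x t‖^2 = 1 := by
    rw [Qm, norm_incE_sq, norm_smul, mul_pow, hx']
    rw [Real.norm_eq_abs, sq_abs, cg_sq t ht]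
    ring
  have hn : ‖Qm x t‖ = 1 := by nlinarith [norm_nonneg (Qm x t)]
  simpa [Sph] using hn

lemma Qm_zero {m : ℕ} (x : Amb m) : Qm x 0 = incE 0 (-1) := by
  simp [Qm, cg_zero, sg]

lemma Qm_one {m : ℕ} (x : Amb m) : Qm x 1 = incE 0 1 := by
  norm_num [Qm, cg_one, sg]

/-- Injectivity analysis. -/
lemma Qm_eq_iff {m : ℕ} {x x' : Amb m} (_hx : x ∈ Sph m) (_hx' : x' ∈ Sph m)
    {t t' : ℝ} (ht : t ∈ Icc (0:ℝ) 1) (ht' : t' ∈ Icc (0:ℝ) 1)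
    (h : Qm x t = Qm x' t') : t = t' ∧ (t = 0 ∨ t = 1 ∨ x = x') := by
  have hlast : sg t = sg t' := by rw [← lastE_Qm x t, ← lastE_Qm x' t', h]
  have htt : t = t' := by simp [sg] at hlast; linarith
  subst htt
  refine ⟨rfl, ?_⟩
  rcases eq_or_lt_of_le ht.1 with h0 | h0
  · exact Or.inl h0.symm
  rcases eq_or_lt_of_le ht.2 with h1 | h1
  · exact Or.inr (Or.inl h1)
  have hc : 0 < cg t := cg_pos t ⟨h0, h1⟩
  have hinit : cg t • x = cg t • x' := by
    rw [← initE_Qm x t, ← initE_Qm x' t, h]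
  exact Or.inr (Or.inr (smul_right_injective _ (ne_of_gt hc) hinit))

def suspSet {m : ℕ} (A : Set (Amb m)) : Set (Amb (m+1)) :=
  (fun p : Amb m × ℝ => Qm p.1 p.2) '' (A ×ˢ Icc (0:ℝ) 1)

def oSusp {m : ℕ} (A : Set (Amb m)) : Set (Amb (m+1)) :=
  (fun p : Amb m × ℝ => Qm p.1 p.2) '' (A ×ˢ Ioo (0:ℝ) 1)

lemma suspSet_subset_sph {m : ℕ} {A : Set (Amb m)} (hA : A ⊆ Sph m) :
    suspSet A ⊆ Sph (m+1) := by
  rintro y ⟨⟨x, t⟩, ⟨hx, ht⟩, rfl⟩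
  exact Qm_mem_sph x (hA hx) t ht

lemma mem_suspSet_iff {m : ℕ} {A : Set (Amb m)} (hA : A ⊆ Sph m) (hne : A.Nonempty)
    {x : Amb m} (hx : x ∈ Sph m) {t : ℝ} (ht : t ∈ Icc (0:ℝ) 1) :
    Qm x t ∈ suspSet A ↔ (t = 0 ∨ t = 1 ∨ x ∈ A) := by
  constructor
  · rintro ⟨⟨b, t'⟩, ⟨hb, ht'⟩, heq⟩
    obtain ⟨htt, hcase⟩ := Qm_eq_iff (hA hb) hx ht' ht heq
    subst htt
    rcases hcase with h | h | h
    · exact Or.inl h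
    · exact Or.inr (Or.inl h)
    · exact Or.inr (Or.inr (h ▸ hb))
  · obtain ⟨b, hb⟩ := hne
    rintro (rfl | rfl | hxa)
    · exact ⟨(b, 0), ⟨hb, by norm_num⟩, by show Qm b 0 = Qm x 0; rw [Qm_zero, Qm_zero]⟩
    · exact ⟨(b, 1), ⟨hb, by norm_num⟩, by show Qm b 1 = Qm x 1; rw [Qm_one, Qm_one]⟩
    · exact ⟨(x, t), ⟨hxa, ht⟩, rfl⟩

-- Part C : generic facts about crumpled cubes
section CubeFacts
variable {n : ℕ} (C : CrumpledCube n)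

lemma sph_nonempty (m : ℕ) : (Sph m).Nonempty :=
  NormedSpace.sphere_nonempty.mpr (by norm_num)

lemma isCompact_sph (m : ℕ) : IsCompact (Sph m) := isCompact_sphere 0 1

lemma isClosed_sph (m : ℕ) : IsClosed (Sph m) := isClosed_sphere

lemma bd_compact : IsCompact C.bd := by
  obtain ⟨e, he, -, hrange⟩ := C.exists_embedding
  haveI : CompactSpace ↥(Sph (n-1)) := isCompact_iff_compactSpace.mp (isCompact_sph (n-1))
  exact hrange ▸ isCompact_range he

lemma bd_nonempty : C.bd.Nonempty := by
  obtain ⟨e, -, -, hrange⟩ := C.exists_embedding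
  obtain ⟨x, hx⟩ := sph_nonempty (n-1)
  exact ⟨e ⟨x, hx⟩, hrange ▸ Set.mem_range_self _⟩

lemma bd_closed : IsClosed C.bd := (bd_compact C).isClosed

lemma int_subset : C.int ⊆ Sph n \ C.bd := by
  obtain ⟨x, hx, hint⟩ := C.int_component
  rw [hint]; exact connectedComponentIn_subset _ _

lemma int_nonempty : C.int.Nonempty := by
  obtain ⟨x, hx, hint⟩ := C.int_component
  exact ⟨x, hint ▸ mem_connectedComponentIn hx⟩

lemma int_preconnected : IsPreconnected C.int := by
  obtain ⟨x, hx, hint⟩ := C.int_component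
  rw [hint]; exact isPreconnected_connectedComponentIn

lemma carrier_subset_sph : C.carrier ⊆ Sph n :=
  Set.union_subset C.bd_subset_sphere ((int_subset C).trans Set.diff_subset)

/-- Shared lemma: a preconnected relatively clopen nonempty subset is the component. -/
lemma component_eq_of_clopen {α : Type*} [TopologicalSpace α] {F s : Set α} {x : α}
    (hs : IsPreconnected s) (hsF : s ⊆ F) (hx : x ∈ s)
    (U Z : Set α) (hU : IsOpen U) (hZ : IsClosed Z) (hUs : s = U ∩ F) (hZs : s = Z ∩ F) :
    connectedComponentIn F x = s := by
  refine Set.Subset.antisymm ?_ (hs.subset_connectedComponentIn hx hsF)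
  set K := connectedComponentIn F x with hK
  have hKF : K ⊆ F := connectedComponentIn_subset _ _
  have hKpre : IsPreconnected K := isPreconnected_connectedComponentIn
  have hcover : K ⊆ U ∪ Zᶜ := by
    intro y hy
    by_cases hys : y ∈ s
    · exact Or.inl (hUs ▸ hys).1
    · refine Or.inr fun hyZ => hys ?_
      rw [hZs]; exact ⟨hyZ, hKF hy⟩
  have hxU : (K ∩ U).Nonempty :=
    ⟨x, mem_connectedComponentIn (hsF hx), (hUs ▸ hx).1⟩
  by_contra hKs
  have hKZc : (K ∩ Zᶜ).Nonempty := by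
    rw [Set.not_subset] at hKs
    obtain ⟨y, hyK, hys⟩ := hKs
    refine ⟨y, hyK, fun hyZ => hys ?_⟩
    rw [hZs]; exact ⟨hyZ, hKF hyK⟩
  obtain ⟨y, hyK, hyU, hyZc⟩ := hKpre U Zᶜ hU hZ.isOpen_compl hcover hxU hKZc
  exact hyZc ((hZs ▸ (hUs ▸ (⟨hyU, hKF hyK⟩ : y ∈ U ∩ F) : y ∈ s)).1)

lemma closure_int_subset : closure C.int ⊆ C.int ∪ C.bd := by
  obtain ⟨x, hx, hint⟩ := C.int_component
  have hVsub : C.int ⊆ Sph n \ C.bd := int_subset C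
  have key : closure C.int ∩ (Sph n \ C.bd) ⊆ C.int := by
    have hpre : IsPreconnected (C.int ∪ (closure C.int ∩ (Sph n \ C.bd))) := by
      apply (int_preconnected C).subset_closure Set.subset_union_left
      exact Set.union_subset subset_closure Set.inter_subset_left
    have hsub : C.int ∪ (closure C.int ∩ (Sph n \ C.bd)) ⊆ connectedComponentIn (Sph n \ C.bd) x := by
      apply hpre.subset_connectedComponentIn (Set.mem_union_left _ (hint ▸ mem_connectedComponentIn hx))
      exact Set.union_subset hVsub Set.inter_subset_right
    intro y hy
    rw [hint]
    exact hsub (Set.mem_union_right _ hy)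
  intro y hy
  have hysph : y ∈ Sph n := by
    have : closure C.int ⊆ Sph n := closure_minimal ((int_subset C).trans Set.diff_subset) (isClosed_sph n)
    exact this hy
  by_cases hyb : y ∈ C.bd
  · exact Or.inr hyb
  · exact Or.inl (key ⟨hy, hysph, hyb⟩)

lemma carrier_closed : IsClosed C.carrier := by
  have : C.carrier = C.bd ∪ closure C.int := by
    apply Set.Subset.antisymm
    · exact Set.union_subset_union_right _ subset_closure
    · refine Set.union_subset Set.subset_union_left ?_
      intro y hy
      rcases closure_int_subset C hy with h | h
      · exact Or.inr h
      · exact Or.inl h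
  rw [this]
  exact (bd_closed C).union isClosed_closure

lemma carrier_compact : IsCompact C.carrier :=
  (isCompact_sph n).of_isClosed_subset (carrier_closed C) (carrier_subset_sph C)

end CubeFacts

-- Part C2 : int is relatively open in the sphere
section IntOpen

instance sphLocConn (n : ℕ) : LocallyConnectedSpace ↥(Sph n) := by
  haveI : ChartedSpace (EuclideanSpace ℝ (Fin n)) ↥(Sph n) :=
    inferInstanceAs (ChartedSpace _ ↥(sphere (0 : EuclideanSpace ℝ (Fin (n+1))) 1))
  exact ChartedSpace.locallyConnectedSpace (EuclideanSpace ℝ (Fin n)) _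

lemma image_connectedComponentIn {α : Type*} [TopologicalSpace α] {s F : Set α}
    (hFs : F ⊆ s) {x : α} (hx : x ∈ F) :
    Subtype.val '' connectedComponentIn {y : ↥s | (y : α) ∈ F} ⟨x, hFs hx⟩
      = connectedComponentIn F x := by
  apply Set.Subset.antisymm
  · apply IsPreconnected.subset_connectedComponentIn
    · exact isPreconnected_connectedComponentIn.image _ continuous_subtype_val.continuousOn
    · exact ⟨⟨x, hFs hx⟩, mem_connectedComponentIn hx, rfl⟩
    · rintro y ⟨z, hz, rfl⟩
      exact (connectedComponentIn_subset {y : ↥s | (y : α) ∈ F} ⟨x, hFs hx⟩ hz : (z : α) ∈ F)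
  · intro y hy
    have hyF : y ∈ F := connectedComponentIn_subset _ _ hy
    have hysub : connectedComponentIn F x ⊆ s := (connectedComponentIn_subset _ _).trans hFs
    set K' : Set ↥s := {z : ↥s | (z : α) ∈ connectedComponentIn F x} with hK'
    have himg : Subtype.val '' K' = connectedComponentIn F x := by
      apply Set.Subset.antisymm
      · rintro w ⟨z, hz, rfl⟩; exact hz
      · intro w hw; exact ⟨⟨w, hysub hw⟩, hw, rfl⟩
    have hK'pre : IsPreconnected K' := by
      rw [← Topology.IsInducing.subtypeVal.isPreconnected_image, himg]
      exact isPreconnected_connectedComponentIn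
    have : K' ⊆ connectedComponentIn {y : ↥s | (y : α) ∈ F} ⟨x, hFs hx⟩ := by
      apply hK'pre.subset_connectedComponentIn
      · exact mem_connectedComponentIn hx
      · intro z hz
        exact (connectedComponentIn_subset F x (hz : (z : α) ∈ connectedComponentIn F x) : (z : α) ∈ F)
    exact ⟨⟨y, hysub hy⟩, this hy, rfl⟩

lemma int_rel_open {n : ℕ} (C : CrumpledCube n) :
    ∃ O : Set (Amb n), IsOpen O ∧ C.int = O ∩ Sph n := by
  obtain ⟨x, hx, hint⟩ := C.int_component
  set F : Set (Amb n) := Sph n \ C.bd with hF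
  have hFs : F ⊆ Sph n := Set.diff_subset
  set F' : Set ↥(Sph n) := {y : ↥(Sph n) | (y : Amb n) ∈ F} with hF'
  have hF'open : IsOpen F' := by
    have : F' = Subtype.val ⁻¹' (C.bd)ᶜ := by
      ext y; simp [hF', hF, y.2]
    rw [this]
    exact (bd_closed C).isOpen_compl.preimage continuous_subtype_val
  have hopen' : IsOpen (connectedComponentIn F' ⟨x, hFs hx⟩) :=
    hF'open.connectedComponentIn
  obtain ⟨O, hO, hOeq⟩ := isOpen_induced_iff.mp hopen'
  refine ⟨O, hO, ?_⟩
  rw [hint, ← image_connectedComponentIn hFs hx]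
  rw [← hOeq]
  apply Set.Subset.antisymm
  · rintro y ⟨z, hz, rfl⟩; exact ⟨hz, z.2⟩
  · rintro y ⟨hyO, hySph⟩; exact ⟨⟨y, hySph⟩, hyO, rfl⟩
end IntOpen

-- Part D0 : helper lemmas
lemma mem_sph_iff_norm {m : ℕ} (x : Amb m) : x ∈ Sph m ↔ ‖x‖ = 1 := by
  simp [Sph, mem_sphere_iff_norm]

lemma norm_split {m : ℕ} (y : Amb (m+1)) : ‖y‖^2 = ‖initE y‖^2 + (lastE y)^2 := by
  conv_lhs => rw [← incE_initE_lastE y]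
  exact norm_incE_sq _ _

lemma incE_inj {m : ℕ} {x x' : Amb m} {s s' : ℝ} (h : incE x s = incE x' s') :
    x = x' ∧ s = s' := by
  constructor
  · rw [← initE_incE x s, ← initE_incE x' s', h]
  · rw [← lastE_incE x s, ← lastE_incE x' s', h]

lemma cg_eq_sqrt (t : ℝ) : cg t = Real.sqrt (1 - (sg t)^2) := rfl

lemma sg_half : sg (1/2) = 0 := by norm_num [sg]

-- Part D1 : the boundary embedding of the suspension
section Emb
variable {k : ℕ}

open Classical in
def nmap (w : Amb k) : ↥(Sph k) :=
  if h : w = 0 then ⟨(sph_nonempty k).choose, (sph_nonempty k).choose_spec⟩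
  else ⟨‖w‖⁻¹ • w, (mem_sph_iff_norm _).mpr (norm_smul_inv_norm h)⟩

lemma nmap_ne (w : Amb k) (hw : w ≠ 0) : (nmap w : Amb k) = ‖w‖⁻¹ • w := by
  rw [nmap, dif_neg hw]

lemma nmap_smul (c : ℝ) (hc : 0 < c) (v : ↥(Sph k)) : nmap (c • (v : Amb k)) = v := by
  have hv1 : ‖(v : Amb k)‖ = 1 := (mem_sph_iff_norm _).mp v.2
  have hne : c • (v : Amb k) ≠ 0 := by
    intro h
    have : ‖c • (v : Amb k)‖ = 0 := by rw [h, norm_zero]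
    rw [norm_smul, hv1, mul_one, Real.norm_eq_abs, abs_of_pos hc] at this
    exact hc.ne' this
  apply Subtype.ext
  rw [nmap_ne _ hne, norm_smul, hv1, mul_one, Real.norm_eq_abs, abs_of_pos hc,
    smul_smul, inv_mul_cancel₀ hc.ne', one_smul]

variable (e0 : ↥(Sph k) → Amb (k+1))

def gmap (w : Amb k) : Amb (k+1) := ‖w‖ • e0 (nmap w)

lemma gmap_zero : gmap e0 0 = 0 := by simp [gmap]

lemma norm_e0 (hbd : Set.range e0 ⊆ Sph (k+1)) (z : ↥(Sph k)) : ‖e0 z‖ = 1 :=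
  (mem_sph_iff_norm _).mp (hbd (Set.mem_range_self z))

lemma norm_gmap (hbd : Set.range e0 ⊆ Sph (k+1)) (w : Amb k) : ‖gmap e0 w‖ = ‖w‖ := by
  rw [gmap, norm_smul, norm_e0 e0 hbd, mul_one, Real.norm_eq_abs, abs_norm]

lemma gmap_inj (hbd : Set.range e0 ⊆ Sph (k+1)) {w w' : Amb k} (hinj : Function.Injective e0)
    (h : gmap e0 w = gmap e0 w') : w = w' := by
  have hnorm : ‖w‖ = ‖w'‖ := by
    rw [← norm_gmap e0 hbd w, ← norm_gmap e0 hbd w', h]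
  by_cases hw : w = 0
  · subst hw
    rw [norm_zero] at hnorm
    exact (norm_eq_zero.mp hnorm.symm).symm
  · have hw' : w' ≠ 0 := by
      intro h0
      rw [h0, norm_zero, norm_eq_zero] at hnorm
      exact hw hnorm
    have hnz : ‖w‖ ≠ 0 := norm_ne_zero_iff.mpr hw
    have he : e0 (nmap w) = e0 (nmap w') := by
      have := h
      rw [gmap, gmap, ← hnorm] at this
      exact smul_right_injective _ hnz this
    have hn : (nmap w : Amb k) = (nmap w' : Amb k) := congrArg _ (hinj he)
    rw [nmap_ne w hw, nmap_ne w' hw'] at hn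
    have : w = ‖w‖ • (‖w'‖⁻¹ • w') := by
      rw [← hn, smul_smul, mul_inv_cancel₀ hnz, one_smul]
    rw [this, hnorm, smul_smul, mul_inv_cancel₀ (norm_ne_zero_iff.mpr hw'), one_smul]

lemma continuous_gmap (hbd : Set.range e0 ⊆ Sph (k+1)) (he : Continuous e0) : Continuous (gmap e0) := by
  rw [continuous_iff_continuousAt]
  intro w0
  by_cases hw0 : w0 = 0
  · subst hw0
    rw [ContinuousAt, gmap_zero]
    exact squeeze_zero_norm (fun w => le_of_eq (norm_gmap e0 hbd w)) tendsto_norm_zero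
  · have hU : {w : Amb k | w ≠ 0} ∈ nhds w0 :=
      (isOpen_compl_singleton).mem_nhds hw0
    have hnm : ContinuousAt (fun w => (nmap w : Amb k)) w0 := by
      apply ContinuousAt.congr (f := fun w : Amb k => ‖w‖⁻¹ • w)
      · exact ((continuous_norm.continuousAt.inv₀ (norm_ne_zero_iff.mpr hw0)).smul continuousAt_id)
      · filter_upwards [hU] with w hw
        exact (nmap_ne w hw).symm
    have hnmap : ContinuousAt (nmap : Amb k → ↥(Sph k)) w0 := by
      rw [Topology.IsInducing.subtypeVal.continuousAt_iff]
      exact hnm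
    exact continuousAt_id.norm.smul (he.continuousAt.comp hnmap)

end Emb

-- Part D2 : the suspension boundary embedding
lemma exists_susp_embedding {k : ℕ} (A : Set (Amb (k+1))) (hA : A ⊆ Sph (k+1))
    (e0 : ↥(Sph k) → Amb (k+1)) (he : Continuous e0) (hinj : Function.Injective e0)
    (hr : Set.range e0 = A) :
    ∃ E : ↥(Sph (k+1)) → Amb (k+2),
      Continuous E ∧ Function.Injective E ∧ Set.range E = suspSet A := by
  have hbd : Set.range e0 ⊆ Sph (k+1) := hr ▸ hA
  have hAne : A.Nonempty := by
    obtain ⟨p, hp⟩ := sph_nonempty k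
    exact ⟨e0 ⟨p, hp⟩, hr ▸ Set.mem_range_self _⟩
  refine ⟨fun u => incE (gmap e0 (initE (u : Amb (k+1)))) (lastE (u : Amb (k+1))), ?_, ?_, ?_⟩
  · refine continuous_incE.comp (Continuous.prodMk ?_ ?_)
    · exact (continuous_gmap e0 hbd he).comp (continuous_initE.comp continuous_subtype_val)
    · exact continuous_lastE.comp continuous_subtype_val
  · intro u u' h
    obtain ⟨hg, hs⟩ := incE_inj h
    have hnorm : ‖initE (u : Amb (k+1))‖ = ‖initE (u' : Amb (k+1))‖ := by
      rw [← norm_gmap e0 hbd, ← norm_gmap e0 hbd, hg]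
    apply Subtype.ext
    by_cases hw : initE (u : Amb (k+1)) = 0
    · have hw' : initE (u' : Amb (k+1)) = 0 := by
        rw [hw, norm_zero] at hnorm
        exact norm_eq_zero.mp hnorm.symm
      rw [← incE_initE_lastE (u : Amb (k+1)), ← incE_initE_lastE (u' : Amb (k+1)),
        hw, hw', hs]
    · have := gmap_inj e0 hbd hinj hg
      rw [← incE_initE_lastE (u : Amb (k+1)), ← incE_initE_lastE (u' : Amb (k+1)),
        this, hs]
  · ext y
    constructor
    · rintro ⟨u, rfl⟩
      set w := initE (u : Amb (k+1)) with hwdef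
      set s := lastE (u : Amb (k+1)) with hsdef
      have hnorm1 : ‖(u : Amb (k+1))‖ = 1 := (mem_sph_iff_norm _).mp u.2
      have hsum : ‖w‖^2 + s^2 = 1 := by
        rw [← norm_split, hnorm1]; norm_num
      obtain ⟨b, hb⟩ := hAne
      by_cases hw : w = 0
      · have hs2 : s^2 = 1 := by rw [hw, norm_zero] at hsum; linarith
        have hs' : s = 1 ∨ s = -1 := by
          have : (s-1)*(s+1) = 0 := by nlinarith
          rcases mul_eq_zero.mp this with h | h
          · exact Or.inl (by linarith)
          · exact Or.inr (by linarith)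
        rcases hs' with hs1 | hs1
        · refine ⟨(b, 1), ⟨hb, by norm_num⟩, ?_⟩
          show Qm b 1 = incE (gmap e0 w) s
          rw [Qm_one, hw, gmap_zero, hs1]
        · refine ⟨(b, 0), ⟨hb, by norm_num⟩, ?_⟩
          show Qm b 0 = incE (gmap e0 w) s
          rw [Qm_zero, hw, gmap_zero, hs1]
      · have hwpos : 0 < ‖w‖ := norm_pos_iff.mpr hw
        have hs2 : s^2 < 1 := by nlinarith
        have hsIcc : -1 < s ∧ s < 1 := abs_lt.mp (by nlinarith [abs_nonneg s, sq_abs s])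
        refine ⟨(e0 (nmap w), (s+1)/2), ⟨hr ▸ Set.mem_range_self _,
          by constructor <;> [linarith [hsIcc.1]; linarith [hsIcc.2]]⟩, ?_⟩
        show Qm (e0 (nmap w)) ((s+1)/2) = incE (gmap e0 w) s
        have hsg : sg ((s+1)/2) = s := by rw [sg]; ring
        have hcg : cg ((s+1)/2) = ‖w‖ := by
          rw [cg_eq_sqrt, hsg, show 1 - s^2 = ‖w‖^2 by linarith,
            Real.sqrt_sq (norm_nonneg w)]
        rw [Qm, hsg, hcg]
        rfl
    · rintro ⟨⟨b, t⟩, ⟨hb, ht⟩, rfl⟩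
      show (Qm b t) ∈ _
      obtain ⟨v, hv⟩ : ∃ v, e0 v = b := by rwa [← Set.mem_range, hr]
      have hv1 : ‖(v : Amb k)‖ = 1 := (mem_sph_iff_norm _).mp v.2
      have ht' : t ∈ Icc (0:ℝ) 1 := ht
      set u : Amb (k+1) := incE (cg t • (v : Amb k)) (sg t) with hu
      have husph : u ∈ Sph (k+1) := by
        rw [mem_sph_iff_norm]
        have : ‖u‖^2 = 1 := by
          rw [hu, norm_incE_sq, norm_smul, mul_pow, hv1, Real.norm_eq_abs, sq_abs,
            cg_sq t ht']
          ring
        nlinarith [norm_nonneg u]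
      refine ⟨⟨u, husph⟩, ?_⟩
      show incE (gmap e0 (initE u)) (lastE u) = Qm b t
      rw [hu, initE_incE, lastE_incE]
      rcases eq_or_lt_of_le ht'.1 with h0 | h0
      · rw [← h0, cg_zero, zero_smul, gmap_zero, Qm_zero]
        norm_num [sg]
      rcases eq_or_lt_of_le ht'.2 with h1 | h1
      · rw [h1, cg_one, zero_smul, gmap_zero, Qm_one]
        norm_num [sg]
      have hcpos : 0 < cg t := cg_pos t ⟨h0, h1⟩
      have hnm : nmap (cg t • (v : Amb k)) = v := nmap_smul (cg t) hcpos v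
      have hns : ‖cg t • (v : Amb k)‖ = cg t := by
        rw [norm_smul, Real.norm_eq_abs, abs_of_pos hcpos, hv1, mul_one]
      rw [Qm, gmap, hnm, hns, hv]

-- Part D3 : the interior of the suspension
section IntSusp
variable {n : ℕ} (C : CrumpledCube n)

lemma oSusp_subset_diff : oSusp C.int ⊆ Sph (n+1) \ suspSet C.bd := by
  rintro y ⟨⟨x, t⟩, ⟨hx, ht⟩, rfl⟩
  have hxs : x ∈ Sph n := ((int_subset C) hx).1
  have htI : t ∈ Icc (0:ℝ) 1 := ⟨ht.1.le, ht.2.le⟩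
  refine ⟨Qm_mem_sph x hxs t htI, fun hmem => ?_⟩
  rcases (mem_suspSet_iff C.bd_subset_sphere (bd_nonempty C) hxs htI).mp hmem with h | h | h
  · exact ht.1.ne' h
  · exact ht.2.ne h
  · exact ((int_subset C) hx).2 h

lemma oSusp_preconnected : IsPreconnected (oSusp C.int) :=
  ((int_preconnected C).prod isPreconnected_Ioo).image _ continuous_Qm.continuousOn

lemma closure_int_compact : IsCompact (closure C.int) :=
  (isCompact_sph n).of_isClosed_subset isClosed_closure
    (closure_minimal ((int_subset C).trans Set.diff_subset) (isClosed_sph n))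

lemma oSusp_eq_open_inter : ∃ O : Set (Amb (n+1)), IsOpen O ∧
    oSusp C.int = O ∩ (Sph (n+1) \ suspSet C.bd) := by
  obtain ⟨Oint, hOint, hOeq⟩ := int_rel_open C
  set U0 : Set (Amb (n+1)) := {y | initE y ≠ 0} with hU0
  have hU0open : IsOpen U0 := isOpen_compl_singleton.preimage continuous_initE
  set N : Amb (n+1) → Amb n := fun y => ‖initE y‖⁻¹ • initE y with hN
  have hNcont : ContinuousOn N U0 := by
    refine ContinuousOn.smul (f := fun y => ‖initE y‖⁻¹) (g := fun y => initE y) ?_ ?_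
    · exact (continuous_initE.norm.continuousOn).inv₀ fun y hy => norm_ne_zero_iff.mpr hy
    · exact continuous_initE.continuousOn
  set O : Set (Amb (n+1)) := (U0 ∩ N ⁻¹' Oint) ∩ lastE ⁻¹' (Ioo (-1:ℝ) 1) with hO
  have hOopen : IsOpen O :=
    (hNcont.isOpen_inter_preimage hU0open hOint).inter
      (isOpen_Ioo.preimage continuous_lastE)
  refine ⟨O, hOopen, Set.Subset.antisymm ?_ ?_⟩
  · rintro y hy
    obtain ⟨⟨x, t⟩, ⟨hx, ht⟩, rfl⟩ := hy
    have hxs : ‖x‖ = 1 := (mem_sph_iff_norm x).mp ((int_subset C) hx).1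
    have hcpos : 0 < cg t := cg_pos t ht
    have hinit : initE (Qm x t) = cg t • x := initE_Qm x t
    have hninit : ‖initE (Qm x t)‖ = cg t := by
      rw [hinit, norm_smul, Real.norm_eq_abs, abs_of_pos hcpos, hxs, mul_one]
    refine ⟨⟨⟨?_, ?_⟩, ?_⟩, oSusp_subset_diff C ⟨⟨x, t⟩, ⟨hx, ht⟩, rfl⟩⟩
    · show initE (Qm x t) ≠ 0
      intro h0
      rw [h0, norm_zero] at hninit
      exact hcpos.ne hninit
    · show N (Qm x t) ∈ Oint
      have : N (Qm x t) = x := by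
        rw [hN]
        show ‖initE (Qm x t)‖⁻¹ • initE (Qm x t) = x
        rw [hninit, hinit, smul_smul, inv_mul_cancel₀ hcpos.ne', one_smul]
      rw [this]
      exact (hOeq ▸ hx : x ∈ Oint ∩ Sph n).1
    · show lastE (Qm x t) ∈ Ioo (-1:ℝ) 1
      rw [lastE_Qm]
      exact ⟨by simp [sg]; linarith [ht.1], by simp [sg]; linarith [ht.2]⟩
  · rintro y ⟨⟨⟨hy0, hyN⟩, hyL⟩, hysph, hybd⟩
    set w := initE y with hwdef
    set s := lastE y with hsdef
    have hy1 : ‖y‖ = 1 := (mem_sph_iff_norm y).mp hysph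
    have hsum : ‖w‖^2 + s^2 = 1 := by rw [← norm_split, hy1]; norm_num
    have hsIoo : s ∈ Ioo (-1:ℝ) 1 := hyL
    set x := ‖w‖⁻¹ • w with hxdef
    have hx1 : ‖x‖ = 1 := norm_smul_inv_norm hy0
    have hxint : x ∈ C.int := by
      rw [hOeq]
      exact ⟨hyN, (mem_sph_iff_norm x).mpr hx1⟩
    have hwpos : 0 < ‖w‖ := norm_pos_iff.mpr hy0
    have htm : (s+1)/2 ∈ Ioo (0:ℝ) 1 := ⟨by linarith [hsIoo.1], by linarith [hsIoo.2]⟩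
    refine ⟨(x, (s+1)/2), ⟨hxint, htm⟩, ?_⟩
    · show Qm x ((s+1)/2) = y
      have hsg : sg ((s+1)/2) = s := by rw [sg]; ring
      have hcg : cg ((s+1)/2) = ‖w‖ := by
        rw [cg_eq_sqrt, hsg, show 1 - s^2 = ‖w‖^2 by linarith,
          Real.sqrt_sq (norm_nonneg w)]
      rw [Qm, hsg, hcg, hxdef, smul_smul, mul_inv_cancel₀ hwpos.ne', one_smul]
      exact incE_initE_lastE y

lemma oSusp_eq_closed_inter :
    oSusp C.int = ((fun p : Amb n × ℝ => Qm p.1 p.2) '' (closure C.int ×ˢ Icc (0:ℝ) 1))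
      ∩ (Sph (n+1) \ suspSet C.bd) := by
  apply Set.Subset.antisymm
  · intro y hy
    refine ⟨?_, oSusp_subset_diff C hy⟩
    obtain ⟨⟨x, t⟩, ⟨hx, ht⟩, rfl⟩ := hy
    exact ⟨(x, t), ⟨subset_closure hx, ⟨ht.1.le, ht.2.le⟩⟩, rfl⟩
  · rintro y ⟨⟨⟨x, t⟩, ⟨hx, ht⟩, rfl⟩, hysph, hybd⟩
    have hxsp : x ∈ Sph n := by
      rcases closure_int_subset C hx with h | h
      · exact ((int_subset C) h).1
      · exact C.bd_subset_sphere h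
    have hne : ¬ (t = 0 ∨ t = 1 ∨ x ∈ C.bd) := fun h =>
      hybd ((mem_suspSet_iff C.bd_subset_sphere (bd_nonempty C) hxsp ht).mpr h)
    push_neg at hne
    obtain ⟨ht0, ht1, hxbd⟩ := hne
    have hxint : x ∈ C.int := by
      rcases closure_int_subset C hx with h | h
      · exact h
      · exact absurd h hxbd
    exact ⟨(x, t), ⟨hxint, ⟨lt_of_le_of_ne ht.1 (Ne.symm ht0), lt_of_le_of_ne ht.2 ht1⟩⟩, rfl⟩

lemma isClosed_QmClosure : IsClosed ((fun p : Amb n × ℝ => Qm p.1 p.2) '' (closure C.int ×ˢ Icc (0:ℝ) 1)) :=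
  (((closure_int_compact C).prod isCompact_Icc).image continuous_Qm).isClosed

lemma suspSet_carrier_eq :
    suspSet C.carrier = suspSet C.bd ∪ oSusp C.int := by
  apply Set.Subset.antisymm
  · rintro y ⟨⟨x, t⟩, ⟨hx, ht⟩, rfl⟩
    rcases hx with hxb | hxi
    · exact Or.inl ⟨(x, t), ⟨hxb, ht⟩, rfl⟩
    · obtain ⟨b, hb⟩ := bd_nonempty C
      rcases eq_or_lt_of_le ht.1 with h0 | h0
      · obtain rfl : (0:ℝ) = t := h0
        refine Or.inl ⟨(b, 0), ⟨hb, by norm_num⟩, ?_⟩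
        show Qm b 0 = Qm x 0
        rw [Qm_zero, Qm_zero]
      rcases eq_or_lt_of_le ht.2 with h1 | h1
      · obtain rfl : t = 1 := h1
        refine Or.inl ⟨(b, 1), ⟨hb, by norm_num⟩, ?_⟩
        show Qm b 1 = Qm x 1
        rw [Qm_one, Qm_one]
      · exact Or.inr ⟨(x, t), ⟨hxi, ⟨h0, h1⟩⟩, rfl⟩
  · apply Set.union_subset
    · exact Set.image_mono (Set.prod_mono (Set.subset_union_left) subset_rfl)
    · refine Set.image_mono (Set.prod_mono (Set.subset_union_right) Set.Ioo_subset_Icc_self)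

end IntSusp

-- Part D4 : the suspension crumpled cube
def suspCube {k : ℕ} (C : CrumpledCube (k+1)) : CrumpledCube (k+2) where
  bd := suspSet C.bd
  int := oSusp C.int
  bd_subset_sphere := suspSet_subset_sph C.bd_subset_sphere
  exists_embedding := by
    obtain ⟨e0, he, hinj, hr⟩ := C.exists_embedding
    exact exists_susp_embedding C.bd C.bd_subset_sphere e0 he hinj hr
  int_component := by
    obtain ⟨x0, hx0⟩ := int_nonempty C
    have hy0 : Qm x0 (1/2) ∈ oSusp C.int :=
      ⟨(x0, 1/2), ⟨hx0, by norm_num⟩, rfl⟩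
    refine ⟨Qm x0 (1/2), oSusp_subset_diff C hy0, ?_⟩
    obtain ⟨O, hOopen, hOeq⟩ := oSusp_eq_open_inter C
    exact (component_eq_of_clopen (oSusp_preconnected C) (oSusp_subset_diff C) hy0
      O _ hOopen (isClosed_QmClosure C) hOeq (oSusp_eq_closed_inter C)).symm

lemma suspCube_bd {k : ℕ} (C : CrumpledCube (k+1)) : (suspCube C).bd = suspSet C.bd := rfl

lemma suspCube_carrier {k : ℕ} (C : CrumpledCube (k+1)) :
    (suspCube C).carrier = suspSet C.carrier := by
  rw [CrumpledCube.carrier, suspSet_carrier_eq]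
  rfl

-- Part E : the homeomorphisms
section Homeos

lemma continuous_suspMap {X Y : Type*} [TopologicalSpace X] [TopologicalSpace Y]
    {f : X → Y} (hf : Continuous f) : Continuous (Susp.map f) := by
  apply continuous_quot_lift
  exact continuous_quot_mk.comp ((hf.comp continuous_fst).prodMk continuous_snd)

lemma suspMap_mk {X Y : Type*} (f : X → Y) (a : X × I) :
    Susp.map f (Quot.mk _ a) = Quot.mk _ (f a.1, a.2) := rfl

lemma suspMap_comp_apply {X Y Z : Type*} (f : X → Y) (g : Y → Z) (z : Susp X) :
    Susp.map g (Susp.map f z) = Susp.map (g ∘ f) z := by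
  induction z using Quot.ind with
  | _ a => rfl

lemma suspMap_id_apply {X : Type*} (z : Susp X) : Susp.map (id : X → X) z = z := by
  induction z using Quot.ind with
  | _ a => rfl

instance suspCompact {X : Type*} [TopologicalSpace X] [CompactSpace X] :
    CompactSpace (Susp X) := by
  constructor
  have : (Set.univ : Set (Susp X)) = Quot.mk _ '' Set.univ := by
    ext z
    simp only [Set.image_univ, Set.mem_univ, true_iff, Set.mem_range]
    exact (Quot.exists_rep z).imp fun a ha => ha
  rw [this]
  exact isCompact_univ.image continuous_quot_mk

def suspF {n : ℕ} (A : Set (Amb n)) (hA : A ⊆ Sph n) (p : ↥A × I) : ↥(suspSet A) :=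
  ⟨Qm (p.1 : Amb n) (p.2 : ℝ), ((p.1 : Amb n), (p.2 : ℝ)), ⟨p.1.2, p.2.2⟩, rfl⟩

lemma suspF_resp {n : ℕ} (A : Set (Amb n)) (hA : A ⊆ Sph n) :
    ∀ a b : ↥A × I, SuspRel ↥A a b → suspF A hA a = suspF A hA b := by
  rintro ⟨a, t⟩ ⟨b, u⟩ (heq | ⟨h1, h2⟩ | ⟨h1, h2⟩)
  · rw [heq]
  · apply Subtype.ext
    show Qm _ _ = Qm _ _
    have ht0 : ((t : ℝ)) = 0 := by exact_mod_cast congrArg Subtype.val h1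
    have hu0 : ((u : ℝ)) = 0 := by exact_mod_cast congrArg Subtype.val h2
    rw [ht0, hu0, Qm_zero, Qm_zero]
  · apply Subtype.ext
    show Qm _ _ = Qm _ _
    have ht0 : ((t : ℝ)) = 1 := by exact_mod_cast congrArg Subtype.val h1
    have hu0 : ((u : ℝ)) = 1 := by exact_mod_cast congrArg Subtype.val h2
    rw [ht0, hu0, Qm_one, Qm_one]

def suspL {n : ℕ} (A : Set (Amb n)) (hA : A ⊆ Sph n) : Susp ↥A → ↥(suspSet A) :=
  Quot.lift (suspF A hA) (suspF_resp A hA)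

lemma suspF_val_continuous {n : ℕ} (A : Set (Amb n)) :
    Continuous (fun p : ↥A × I => Qm (p.1 : Amb n) (p.2 : ℝ)) := by
  show Continuous ((fun q : Amb n × ℝ => Qm q.1 q.2) ∘
    (fun p : ↥A × I => ((p.1 : Amb n), (p.2 : ℝ))))
  apply continuous_Qm.comp
  exact (continuous_subtype_val.comp continuous_fst).prodMk
    (continuous_subtype_val.comp continuous_snd)

lemma suspL_continuous {n : ℕ} (A : Set (Amb n)) (hA : A ⊆ Sph n) :
    Continuous (suspL A hA) := by
  apply continuous_quot_lift
  exact Continuous.subtype_mk (suspF_val_continuous A) _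

lemma suspL_bijective {n : ℕ} (A : Set (Amb n)) (hA : A ⊆ Sph n) :
    Function.Bijective (suspL A hA) := by
  constructor
  · intro z z'
    induction z using Quot.ind with
    | _ p =>
      induction z' using Quot.ind with
      | _ p' =>
        intro heq
        obtain ⟨a, t⟩ := p
        obtain ⟨b, u⟩ := p'
        have hQ : Qm (a : Amb n) (t : ℝ) = Qm (b : Amb n) (u : ℝ) :=
          congrArg Subtype.val heq
        obtain ⟨htu, hcase⟩ := Qm_eq_iff (hA a.2) (hA b.2)
          ⟨t.2.1, t.2.2⟩ ⟨u.2.1, u.2.2⟩ hQ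
        apply Quot.sound
        rcases hcase with h0 | h1 | hab
        · exact Or.inr (Or.inl ⟨Subtype.ext h0, Subtype.ext (htu ▸ h0)⟩)
        · exact Or.inr (Or.inr ⟨Subtype.ext h1, Subtype.ext (htu ▸ h1)⟩)
        · exact Or.inl (Prod.ext (Subtype.ext hab) (Subtype.ext htu))
  · rintro ⟨y, ⟨⟨x, t⟩, ⟨hx, ht⟩, rfl⟩⟩
    exact ⟨Quot.mk _ (⟨x, hx⟩, ⟨t, ht⟩), Subtype.ext rfl⟩

/-- The homeomorphism between the abstract suspension of a compact subset of the
sphere and its concrete suspension inside the next sphere. -/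
def suspHomeo {n : ℕ} (A : Set (Amb n)) (hA : A ⊆ Sph n) (hcomp : IsCompact A) :
    Susp ↥A ≃ₜ ↥(suspSet A) :=
  haveI : CompactSpace ↥A := isCompact_iff_compactSpace.mp hcomp
  Continuous.homeoOfEquivCompactToT2
    (f := Equiv.ofBijective (suspL A hA) (suspL_bijective A hA))
    (suspL_continuous A hA)

lemma suspHomeo_mk {n : ℕ} (A : Set (Amb n)) (hA : A ⊆ Sph n) (hcomp : IsCompact A)
    (p : ↥A × I) :
    ((suspHomeo A hA hcomp (Quot.mk _ p) : ↥(suspSet A)) : Amb (n+1))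
      = Qm (p.1 : Amb n) (p.2 : ℝ) := rfl

end Homeos

-- Part F : assembly helpers
def suspMapHomeo {X Y : Type*} [TopologicalSpace X] [TopologicalSpace Y] (e : X ≃ₜ Y) :
    Susp X ≃ₜ Susp Y where
  toFun := Susp.map e
  invFun := Susp.map e.symm
  left_inv := by
    intro z
    rw [suspMap_comp_apply]
    have : (⇑e.symm ∘ ⇑e) = (id : X → X) := by funext x; simp
    rw [this, suspMap_id_apply]
  right_inv := by
    intro z
    rw [suspMap_comp_apply]
    have : (⇑e ∘ ⇑e.symm) = (id : Y → Y) := by funext x; simp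
    rw [this, suspMap_id_apply]
  continuous_toFun := continuous_suspMap e.continuous
  continuous_invFun := continuous_suspMap e.symm.continuous

section Assembly
variable {k : ℕ} (C : CrumpledCube (k+1))

def carrierHomeo : Susp ↥C.carrier ≃ₜ ↥(suspCube C).carrier :=
  (suspHomeo C.carrier (carrier_subset_sph C) (carrier_compact C)).trans
    (Homeomorph.setCongr (suspCube_carrier C).symm)

def bdHomeo : Susp ↥C.bd ≃ₜ ↥(suspCube C).bd :=
  suspHomeo C.bd C.bd_subset_sphere (bd_compact C)

lemma carrierHomeo_coord (p : ↥C.carrier × I) :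
    ((carrierHomeo C (Quot.mk _ p) : ↥(suspCube C).carrier) : Amb (k+2))
      = Qm (p.1 : Amb (k+1)) (p.2 : ℝ) := rfl

lemma bdHomeo_coord (p : ↥C.bd × I) :
    ((bdHomeo C (Quot.mk _ p) : ↥(suspCube C).bd) : Amb (k+2))
      = Qm (p.1 : Amb (k+1)) (p.2 : ℝ) := rfl

lemma carrierHomeo_symm_eq (x : ↥C.carrier) (t : I) (y : ↥(suspCube C).carrier)
    (hy : (y : Amb (k+2)) = Qm (x : Amb (k+1)) (t : ℝ)) :
    (carrierHomeo C).symm y = Quot.mk _ (x, t) := by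
  have : y = carrierHomeo C (Quot.mk _ (x, t)) := Subtype.ext hy
  rw [this]
  exact (carrierHomeo C).symm_apply_apply _

lemma carrier_decomp (y : ↥(suspCube C).carrier) :
    ∃ (x : ↥C.carrier) (t : I), (y : Amb (k+2)) = Qm (x : Amb (k+1)) (t : ℝ) := by
  have hy : (y : Amb (k+2)) ∈ suspSet C.carrier := by
    rw [← suspCube_carrier C]; exact y.2
  obtain ⟨⟨x, t⟩, ⟨hx, ht⟩, heq⟩ := hy
  exact ⟨⟨x, hx⟩, ⟨t, ht⟩, heq.symm⟩

lemma mem_suspCube_bd_iff (x : Amb (k+1)) (hx : x ∈ Sph (k+1)) (t : ℝ) (ht : t ∈ Icc (0:ℝ) 1) :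
    Qm x t ∈ (suspCube C).bd ↔ (t = 0 ∨ t = 1 ∨ x ∈ C.bd) :=
  mem_suspSet_iff C.bd_subset_sphere (bd_nonempty C) hx ht

lemma image_susp_bd :
    ⇑(carrierHomeo C) '' Set.range (Susp.map
        (fun x : ↥C.bd => (⟨(x : Amb (k+1)), C.bd_subset_carrier x.2⟩ : ↥C.carrier)))
      = {y : ↥(suspCube C).carrier | (y : Amb (k+2)) ∈ (suspCube C).bd} := by
  ext y
  constructor
  · rintro ⟨z, ⟨z0, rfl⟩, rfl⟩
    induction z0 using Quot.ind with
    | _ p =>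
      obtain ⟨b, t⟩ := p
      show ((carrierHomeo C (Quot.mk _ (⟨(b : Amb (k+1)), C.bd_subset_carrier b.2⟩, t))
        : ↥(suspCube C).carrier) : Amb (k+2)) ∈ (suspCube C).bd
      rw [carrierHomeo_coord]
      exact ⟨((b : Amb (k+1)), (t : ℝ)), ⟨b.2, ⟨t.2.1, t.2.2⟩⟩, rfl⟩
  · intro hy
    obtain ⟨⟨b, t⟩, ⟨hb, ht⟩, heq⟩ := (hy : (y : Amb (k+2)) ∈ suspSet C.bd)
    refine ⟨Susp.map (fun x : ↥C.bd => (⟨(x : Amb (k+1)), C.bd_subset_carrier x.2⟩ : ↥C.carrier))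
      (Quot.mk _ (⟨b, hb⟩, ⟨t, ht⟩)), Set.mem_range_self _, ?_⟩
    exact Subtype.ext heq

end Assembly


/-- **Theorem 4.1.** If `(C,D,h) ∈ 𝒲_n`, then the suspensions of `C` and `D` are
crumpled `(n+1)`-cubes `C'`, `D'` and the suspension of `h` induces a boundary
homeomorphism `h'` with `(C', D', h') ∈ 𝒲_{n+1}`. -/
theorem stmt9 (n : ℕ) (hn : 2 ≤ n) (C D : CrumpledCube n) (h : ↥C.bd ≃ₜ ↥D.bd)
    (hW : MemW C D h) :
    ∃ (C' D' : CrumpledCube (n + 1))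
      (φ : Susp ↥C.carrier ≃ₜ ↥C'.carrier) (ψ : Susp ↥D.carrier ≃ₜ ↥D'.carrier),
      (⇑φ '' Set.range (Susp.map
          (fun x : ↥C.bd => (⟨(x : Amb n), C.bd_subset_carrier x.2⟩ : ↥C.carrier)))
        = {y : ↥C'.carrier | (y : Amb (n + 1)) ∈ C'.bd}) ∧
      (⇑ψ '' Set.range (Susp.map
          (fun y : ↥D.bd => (⟨(y : Amb n), D.bd_subset_carrier y.2⟩ : ↥D.carrier)))
        = {y : ↥D'.carrier | (y : Amb (n + 1)) ∈ D'.bd}) ∧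
      ∃ h' : ↥C'.bd ≃ₜ ↥D'.bd,
        MemW C' D' h' ∧
        ∀ (z : Susp ↥C.bd)
          (hz : ((φ (Susp.map
              (fun x : ↥C.bd => (⟨(x : Amb n), C.bd_subset_carrier x.2⟩ : ↥C.carrier)) z) :
                ↥C'.carrier) : Amb (n + 1)) ∈ C'.bd),
          ((h' ⟨_, hz⟩ : ↥D'.bd) : Amb (n + 1)) =
            ((ψ (Susp.map
                (fun y : ↥D.bd => (⟨(y : Amb n), D.bd_subset_carrier y.2⟩ : ↥D.carrier))
                (Susp.map (fun x : ↥C.bd => h x) z)) : ↥D'.carrier) : Amb (n + 1)) := by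
  obtain ⟨k, rfl⟩ : ∃ k, n = k + 1 := ⟨n - 1, by omega⟩
  obtain ⟨f, hfcont, hfbd, hfiff⟩ := hW
  refine ⟨suspCube C, suspCube D, carrierHomeo C, carrierHomeo D,
    image_susp_bd C, image_susp_bd D,
    ((bdHomeo C).symm.trans (suspMapHomeo h)).trans (bdHomeo D), ?_, ?_⟩
  · -- MemW
    refine ⟨fun y => carrierHomeo D (Susp.map f ((carrierHomeo C).symm y)), ?_, ?_, ?_⟩
    · exact (carrierHomeo D).continuous.comp
        ((continuous_suspMap hfcont).comp (carrierHomeo C).symm.continuous)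
    · -- boundary values
      intro y hy
      have hmem : (y : Amb (k+2)) ∈ suspSet C.bd := hy
      obtain ⟨⟨b, t⟩, ⟨hb, ht⟩, heq⟩ := hmem
      have hsymm : (carrierHomeo C).symm y
          = Quot.mk _ ((⟨b, C.bd_subset_carrier hb⟩ : ↥C.carrier), (⟨t, ht⟩ : I)) :=
        carrierHomeo_symm_eq C _ _ y heq.symm
      have hval : ((carrierHomeo D (Susp.map f ((carrierHomeo C).symm y))
          : ↥(suspCube D).carrier) : Amb (k+2))
          = Qm ((f ⟨b, C.bd_subset_carrier hb⟩ : ↥D.carrier) : Amb (k+1)) t := by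
        rw [hsymm]; rfl
      rw [hval]
      -- right-hand side
      have helt : (⟨(y : Amb (k+2)), hy⟩ : ↥(suspCube C).bd)
          = bdHomeo C (Quot.mk _ ((⟨b, hb⟩ : ↥C.bd), (⟨t, ht⟩ : I))) :=
        Subtype.ext heq.symm
      rw [helt]
      show Qm _ _ = ((bdHomeo D (suspMapHomeo h ((bdHomeo C).symm
        (bdHomeo C (Quot.mk _ (⟨b, hb⟩, ⟨t, ht⟩))))) : ↥(suspCube D).bd) : Amb (k+2))
      rw [show (bdHomeo C).symm (bdHomeo C (Quot.mk _ (⟨b, hb⟩, ⟨t, ht⟩))) = Quot.mk _ (⟨b, hb⟩, ⟨t, ht⟩) from (bdHomeo C).symm_apply_apply _]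
      show Qm _ _ = Qm ((h ⟨b, hb⟩ : ↥D.bd) : Amb (k+1)) t
      rw [hfbd ⟨b, C.bd_subset_carrier hb⟩ hb]
    · -- boundary preimage
      intro y
      obtain ⟨x, t, hy⟩ := carrier_decomp C y
      have hsymm : (carrierHomeo C).symm y = Quot.mk _ (x, t) :=
        carrierHomeo_symm_eq C x t y hy
      have hval : ((carrierHomeo D (Susp.map f ((carrierHomeo C).symm y))
          : ↥(suspCube D).carrier) : Amb (k+2))
          = Qm ((f x : ↥D.carrier) : Amb (k+1)) (t : ℝ) := by
        rw [hsymm]; rfl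
      rw [hval, hy]
      rw [mem_suspCube_bd_iff D _ (carrier_subset_sph D (f x).2) _ ⟨t.2.1, t.2.2⟩,
        mem_suspCube_bd_iff C _ (carrier_subset_sph C x.2) _ ⟨t.2.1, t.2.2⟩]
      constructor
      · rintro (h0 | h1 | hbd)
        · exact Or.inl h0
        · exact Or.inr (Or.inl h1)
        · exact Or.inr (Or.inr ((hfiff x).mp hbd))
      · rintro (h0 | h1 | hbd)
        · exact Or.inl h0
        · exact Or.inr (Or.inl h1)
        · exact Or.inr (Or.inr ((hfiff x).mpr hbd))
  · -- compatibility
    intro z hz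
    induction z using Quot.ind with
    | _ p =>
      obtain ⟨b, t⟩ := p
      have helt : (⟨_, hz⟩ : ↥(suspCube C).bd)
          = bdHomeo C (Quot.mk _ ((b : ↥C.bd), (t : I))) := Subtype.ext rfl
      rw [helt]
      show ((bdHomeo D (suspMapHomeo h ((bdHomeo C).symm
        (bdHomeo C (Quot.mk _ (b, t))))) : ↥(suspCube D).bd) : Amb (k+2)) = _
      rw [show (bdHomeo C).symm (bdHomeo C (Quot.mk _ (b, t))) = Quot.mk _ (b, t) from (bdHomeo C).symm_apply_apply _]
      rfl
end
end

section
/- Let C and D be crumpled n-cubes with wild sets W_C and W_D respectively, and let h : Bd C → Bd D be a homeomorphism with W_D ⊆ h(W_C). Set X = h⁻¹(W_D), and let (C_X, h_X) be a standard flattening of C relative to X. Then (C,D,h) ∈ W_n if and only if (C_X, D, h ∘ h_X⁻¹) ∈ W_n. (Theorem 5.1) -/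
noncomputable section

open Metric Set unitInterval

/-- `(C_X, h_X)` is a standard flattening of the crumpled cube `C` relative to
`X ⊆ Bd C`. -/
def IsStandardFlattening {n : ℕ} (C : CrumpledCube n) (X : Set (Amb n))
    (CX : CrumpledCube n) (hX : ↥C.bd ≃ₜ ↥CX.bd) : Prop :=
  MemW C CX hX ∧
  (∀ x : ↥C.bd, (x : Amb n) ∈ X → ((hX x : ↥CX.bd) : Amb n) = (x : Amb n)) ∧
  C.carrier ⊆ CX.carrier ∧
  (∀ (p : Amb n) (hp : p ∈ CX.bd), p ∉ X →
    LocallyCollaredAt CX ⟨p, CX.bd_subset_carrier hp⟩) ∧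
  ∃ r : ↥CX.carrier → ↥CX.carrier,
    Continuous r ∧
    (∀ y, ((r y : ↥CX.carrier) : Amb n) ∈ C.carrier) ∧
    (∀ y : ↥CX.carrier, ((y : ↥CX.carrier) : Amb n) ∈ C.carrier → r y = y) ∧
    (∃ F : C(↥CX.carrier × I, ↥CX.carrier),
      (∀ y, F (y, 0) = y) ∧ (∀ y, F (y, 1) = r y) ∧
      (∀ (y : ↥CX.carrier) (t : I), ((y : ↥CX.carrier) : Amb n) ∈ C.carrier → F (y, t) = y)) ∧
    (∀ (x : ↥C.bd) (hb : ((hX x : ↥CX.bd) : Amb n) ∈ CX.carrier),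
      ((r ⟨((hX x : ↥CX.bd) : Amb n), hb⟩ : ↥CX.carrier) : Amb n) = (x : Amb n)) ∧
    (∀ y : ↥CX.carrier, (∃ y', y' ≠ y ∧ r y' = r y) →
      ((r y : ↥CX.carrier) : Amb n) ∈ C.bd \ X)


section AuxiliaryMachinery

open Filter

/-- clamp to `[0,1]`. -/
def cl01 (t : ℝ) : ℝ := max 0 (min t 1)

lemma cl01_nonneg (t : ℝ) : 0 ≤ cl01 t := le_max_left _ _
lemma cl01_le_one (t : ℝ) : cl01 t ≤ 1 :=
  max_le (by norm_num) (min_le_right _ _)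
lemma cl01_of_nonpos {t : ℝ} (h : t ≤ 0) : cl01 t = 0 := by
  unfold cl01
  rw [max_eq_left]
  exact le_trans (min_le_left _ _) h
lemma cl01_pos {t : ℝ} (h : 0 < t) : 0 < cl01 t := by
  unfold cl01
  rw [lt_max_iff]
  exact Or.inr (lt_min h one_pos)
lemma cl01_continuous : Continuous cl01 := by
  unfold cl01; fun_prop

/-- A single boundary push on a metric space. -/
structure BdPush {Z : Type*} [MetricSpace Z] (bd : Set Z) where
  P : ℝ → Z → Z
  Λ : Z → ℝ
  cont : Continuous fun q : ℝ × Z => P q.1 q.2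
  nonpos : ∀ u z, u ≤ 0 → P u z = z
  off : ∀ u z, z ∉ bd → P u z ∉ bd
  bdfix : ∀ u z, z ∈ bd → P u z ∈ bd → P u z = z
  expel : ∀ u z, 0 < u → z ∈ bd → 0 < Λ z → P u z ∉ bd

variable {Z : Type*} [MetricSpace Z]

/-- The trivial push. -/
def trivPush (bd : Set Z) : BdPush bd where
  P := fun _ z => z
  Λ := fun _ => 0
  cont := continuous_snd
  nonpos := fun _ _ _ => rfl
  off := fun _ _ h => h
  bdfix := fun _ _ _ _ => rfl
  expel := fun _ _ _ _ h => absurd h (by norm_num)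

lemma BdPush.disp [CompactSpace Z] {bd : Set Z} (S : BdPush bd) {ε : ℝ} (hε : 0 < ε) :
    ∃ c : ℝ, 0 < c ∧ ∀ u, u ≤ c → ∀ z, dist (S.P u z) z ≤ ε := by
  classical
  set B : Set (ℝ × Z) := {q | q.1 ∈ Icc (0:ℝ) 1 ∧ ε ≤ dist (S.P q.1 q.2) q.2} with hBdef
  have hBclosed : IsClosed B := by
    have h1 : IsClosed {q : ℝ × Z | q.1 ∈ Icc (0:ℝ) 1} := isClosed_Icc.preimage continuous_fst
    have h2 : IsClosed {q : ℝ × Z | ε ≤ dist (S.P q.1 q.2) q.2} :=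
      isClosed_le continuous_const (S.cont.dist continuous_snd)
    exact h1.inter h2
  have hBcpt : IsCompact B := by
    refine IsCompact.of_isClosed_subset ((isCompact_Icc (a := (0:ℝ)) (b := 1)).prod isCompact_univ)
      hBclosed ?_
    intro q hq; exact ⟨hq.1, mem_univ _⟩
  by_cases hne : B.Nonempty
  · obtain ⟨q₀, hq₀, hmin⟩ := hBcpt.exists_isMinOn hne continuous_fst.continuousOn
    have hq₀pos : 0 < q₀.1 := by
      rcases lt_or_eq_of_le hq₀.1.1 with h | h
      · exact h
      · exfalso
        have := hq₀.2
        rw [← h] at this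
        rw [S.nonpos 0 q₀.2 le_rfl] at this
        simp at this
        linarith
    refine ⟨q₀.1 / 2, by linarith, ?_⟩
    intro u hu z
    rcases le_or_gt u 0 with h0 | h0
    · rw [S.nonpos u z h0]; simp; linarith
    · by_contra hge
      push_neg at hge
      have hmem : (u, z) ∈ B := by
        refine ⟨⟨le_of_lt h0, ?_⟩, le_of_lt hge⟩
        have : q₀.1 ≤ 1 := hq₀.1.2
        linarith
      have := hmin hmem
      simp only at this
      -- this : q₀.1 ≤ u
      have : q₀.1 ≤ u := this
      linarith
  · refine ⟨1, one_pos, ?_⟩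
    intro u hu z
    rcases le_or_gt u 0 with h0 | h0
    · rw [S.nonpos u z h0]; simp; linarith
    · by_contra hge
      push_neg at hge
      exact hne ⟨(u, z), ⟨⟨le_of_lt h0, hu⟩, le_of_lt hge⟩⟩

theorem core_from_stages [CompleteSpace Z] {bd : Set Z} {ζ : Z → ℝ}
    (hζlip : LipschitzWith 1 ζ) (hζ0 : ∀ z, 0 ≤ ζ z)
    (ST : ℕ → BdPush bd) (LO HI : ℕ → ℝ)
    (hLOpos : ∀ k, 0 < LO k)
    (hLO : ∀ k u z, (ST k).P u z ≠ z → LO k ≤ ζ z)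
    (hHI : ∀ k u z, (ST k).P u z ≠ z → ζ z ≤ HI k)
    (hHIfin : ∀ δ : ℝ, 0 < δ → {k | δ ≤ HI k}.Finite)
    (hcover : ∀ z, z ∈ bd → 0 < ζ z → ∃ k, 0 < (ST k).Λ z)
    (c : ℕ → ℝ) (hc : ∀ k, 0 < c k)
    (hdisp : ∀ k u, u ≤ c k → ∀ z, dist ((ST k).P u z) z ≤ (2⁻¹:ℝ)^(k+2) * min (LO k) 1) :
    ∃ G : ℝ × Z → Z, Continuous G ∧ (∀ t z, t ≤ 0 → G (t, z) = z) ∧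
      ∀ t z, 0 < t → 0 < ζ z → G (t, z) ∉ bd := by
  classical
  have hζdist : ∀ a b : Z, |ζ a - ζ b| ≤ dist a b := by
    intro a b
    have := hζlip.dist_le_mul a b
    rwa [Real.dist_eq, NNReal.coe_one, one_mul] at this
  set W : ℕ → ℝ × Z → Z := fun k =>
    Nat.rec (motive := fun _ => ℝ × Z → Z) (fun q => q.2)
      (fun k Wk q => (ST k).P (c k * cl01 q.1) (Wk q)) k with hWdef
  have hW0 : ∀ q, W 0 q = q.2 := fun _ => rfl
  have hWs : ∀ k q, W (k + 1) q = (ST k).P (c k * cl01 q.1) (W k q) := fun _ _ => rfl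
  have contW : ∀ k, Continuous (W k) := by
    intro k
    induction k with
    | zero => exact continuous_snd
    | succ k ih =>
      have : Continuous fun q : ℝ × Z => (c k * cl01 q.1, W k q) :=
        (continuous_const.mul (cl01_continuous.comp continuous_fst)).prodMk ih
      exact (ST k).cont.comp this
  have hule : ∀ k (t : ℝ), c k * cl01 t ≤ c k :=
    fun k t => mul_le_of_le_one_right (hc k).le (cl01_le_one t)
  have hstep : ∀ k q, dist (W (k + 1) q) (W k q) ≤ (2⁻¹:ℝ)^(k+2) := by
    intro k q
    rw [hWs]
    refine le_trans (hdisp k _ (hule k q.1) (W k q)) ?_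
    have h1 : min (LO k) 1 ≤ 1 := min_le_right _ _
    have h2 : (0:ℝ) < (2⁻¹:ℝ)^(k+2) := by positivity
    nlinarith
  have hest : ∀ q k m, k ≤ m → dist (W m q) (W k q) ≤ (2⁻¹:ℝ)^(k+1) - (2⁻¹:ℝ)^(m+1) := by
    intro q k m hkm
    induction m, hkm using Nat.le_induction with
    | base => simp
    | succ m hm ih =>
      have h1 := hstep m q
      have h2 : dist (W (m+1) q) (W k q) ≤ dist (W (m+1) q) (W m q) + dist (W m q) (W k q) :=
        dist_triangle _ _ _
      have h3 : (2⁻¹:ℝ)^(m+2) = (2⁻¹:ℝ)^(m+1) * 2⁻¹ := pow_succ _ _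
      linarith
  have hpowle : ∀ k m : ℕ, k ≤ m → ((2⁻¹:ℝ))^m ≤ (2⁻¹)^k :=
    fun k m h => pow_le_pow_of_le_one (by norm_num) (by norm_num) h
  have hcauchy : ∀ q, CauchySeq (fun k => W k q) := by
    intro q
    apply cauchySeq_of_le_tendsto_0 (fun N => (2⁻¹:ℝ)^N)
    · intro m' m N hm' hm
      have h1 := hest q N m' hm'
      have h2 := hest q N m hm
      have h3 : dist (W m' q) (W m q) ≤ dist (W m' q) (W N q) + dist (W N q) (W m q) :=
        dist_triangle _ _ _
      rw [dist_comm (W N q)] at h3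
      have h4 : (2⁻¹:ℝ)^(N+1) = (2⁻¹:ℝ)^N * 2⁻¹ := pow_succ _ _
      have h5 : (0:ℝ) < (2⁻¹:ℝ)^(m'+1) := by positivity
      have h6 : (0:ℝ) < (2⁻¹:ℝ)^(m+1) := by positivity
      linarith
    · exact tendsto_pow_atTop_nhds_zero_of_lt_one (by norm_num) (by norm_num)
  have hex : ∀ q, ∃ l, Tendsto (fun k => W k q) atTop (nhds l) :=
    fun q => cauchySeq_tendsto_of_complete (hcauchy q)
  choose G hG using hex
  have hGd : ∀ q k, dist (G q) (W k q) ≤ (2⁻¹:ℝ)^(k+1) := by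
    intro q k
    have htt : Tendsto (fun m => dist (W m q) (W k q)) atTop (nhds (dist (G q) (W k q))) :=
      (hG q).dist tendsto_const_nhds
    refine le_of_tendsto htt ?_
    refine eventually_atTop.2 ⟨k, fun m hm => ?_⟩
    have h1 := hest q k m hm
    have h2 : (0:ℝ) < (2⁻¹:ℝ)^(m+1) := by positivity
    linarith
  have hunif : TendstoUniformly (fun k q => W k q) G atTop := by
    rw [Metric.tendstoUniformly_iff]
    intro ε hε
    obtain ⟨K, hK⟩ := exists_pow_lt_of_lt_one hε (by norm_num : (2⁻¹:ℝ) < 1)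
    refine eventually_atTop.2 ⟨K, fun k hk x => lt_of_le_of_lt (hGd x k) ?_⟩
    exact lt_of_le_of_lt (hpowle K (k+1) (by omega)) hK
  have hGcont : Continuous G := hunif.continuous (Eventually.of_forall contW).frequently
  have hGid : ∀ t z, t ≤ 0 → G (t, z) = z := by
    intro t z ht
    have hWid : ∀ k, W k (t, z) = z := by
      intro k
      induction k with
      | zero => exact hW0 _
      | succ k ih =>
        rw [hWs, ih, cl01_of_nonpos ht, mul_zero]
        exact (ST k).nonpos 0 z le_rfl
    refine tendsto_nhds_unique (hG (t, z)) ?_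
    simpa [hWid] using (tendsto_const_nhds : Tendsto (fun _ : ℕ => z) atTop (nhds z))
  refine ⟨G, hGcont, hGid, ?_⟩
  intro t z ht hζz
  set q : ℝ × Z := (t, z) with hq
  set zs : ℕ → Z := fun k => W k q with hzs
  have hzs0 : zs 0 = z := hW0 q
  have hzss : ∀ k, zs (k+1) = (ST k).P (c k * cl01 t) (zs k) := fun k => hWs k q
  have hupos : 0 < c 0 * cl01 t := mul_pos (hc 0) (cl01_pos ht)
  have hukpos : ∀ k, 0 < c k * cl01 t := fun k => mul_pos (hc k) (cl01_pos ht)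
  -- lower bound for ζ along the orbit
  have hlow : ∀ k, (1/2 : ℝ) * (1 + (2⁻¹:ℝ)^k) * ζ z ≤ ζ (zs k) := by
    intro k
    induction k with
    | zero => rw [hzs0]; norm_num
    | succ k ih =>
      by_cases hmv : (ST k).P (c k * cl01 t) (zs k) = zs k
      · rw [hzss, hmv]
        have h1 : ((2⁻¹:ℝ))^(k+1) ≤ (2⁻¹)^k := hpowle k (k+1) (by omega)
        nlinarith [hζ0 z]
      · have hLOk := hLO k _ _ hmv
        have hd : dist (zs (k+1)) (zs k) ≤ (2⁻¹:ℝ)^(k+2) * min (LO k) 1 := by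
          rw [hzss]; exact hdisp k _ (hule k t) (zs k)
        have hminle : min (LO k) 1 ≤ ζ (zs k) := le_trans (min_le_left _ _) hLOk
        have habs := hζdist (zs (k+1)) (zs k)
        have hppos : (0:ℝ) < (2⁻¹:ℝ)^(k+2) := by positivity
        have hp1 : ((2⁻¹:ℝ))^(k+2) ≤ 1 := by
          calc ((2⁻¹:ℝ))^(k+2) ≤ (2⁻¹)^0 := hpowle 0 (k+2) (by omega)
          _ = 1 := pow_zero _
        have hzknn : 0 ≤ ζ (zs k) := hζ0 _
        have hstep2 : ζ (zs k) * (1 - (2⁻¹:ℝ)^(k+2)) ≤ ζ (zs (k+1)) := by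
          have h5 : dist (zs (k+1)) (zs k) ≤ (2⁻¹:ℝ)^(k+2) * ζ (zs k) := by
            calc dist (zs (k+1)) (zs k) ≤ (2⁻¹:ℝ)^(k+2) * min (LO k) 1 := hd
            _ ≤ (2⁻¹:ℝ)^(k+2) * ζ (zs k) := by nlinarith
          have h6 : ζ (zs k) - ζ (zs (k+1)) ≤ dist (zs (k+1)) (zs k) := by
            have := abs_sub_le_iff.mp habs
            linarith [this.2]
          nlinarith
        have hq1 : (0:ℝ) < (2⁻¹:ℝ)^k := by positivity
        have hq2 : ((2⁻¹:ℝ))^k ≤ 1 := by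
          calc ((2⁻¹:ℝ))^k ≤ (2⁻¹)^0 := hpowle 0 k (by omega)
          _ = 1 := pow_zero _
        have hs1 : ((2⁻¹:ℝ))^(k+1) = (2⁻¹)^k * 2⁻¹ := pow_succ _ _
        have hs2 : ((2⁻¹:ℝ))^(k+2) = (2⁻¹)^(k+1) * 2⁻¹ := pow_succ _ _
        have hζznn : 0 ≤ ζ z := hζ0 z
        nlinarith [ih, hstep2, mul_nonneg hζznn hq1.le]
  have hhalf : ∀ k, ζ z / 2 ≤ ζ (zs k) := by
    intro k
    have h1 := hlow k
    have h2 : (0:ℝ) < (2⁻¹:ℝ)^k := by positivity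
    nlinarith [hζ0 z]
  -- the set of movement indices is finite
  have hmvfin : {k | zs (k+1) ≠ zs k}.Finite := by
    apply Set.Finite.subset (hHIfin (ζ z / 2) (by linarith))
    intro k hk
    simp only [mem_setOf_eq] at hk ⊢
    have hmv : (ST k).P (c k * cl01 t) (zs k) ≠ zs k := by rw [← hzss]; exact hk
    exact le_trans (hhalf k) (hHI k _ _ hmv)
  obtain ⟨K₀, hK₀⟩ := hmvfin.bddAbove
  set K₁ := K₀ + 1 with hK₁
  have hnomove : ∀ k, K₁ ≤ k → zs (k+1) = zs k := by
    intro k hk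
    by_contra hmv
    have := hK₀ (Set.mem_setOf_eq ▸ hmv : k ∈ {k | zs (k+1) ≠ zs k})
    omega
  have hconst : ∀ k, K₁ ≤ k → zs k = zs K₁ := by
    intro k hk
    induction k, hk using Nat.le_induction with
    | base => rfl
    | succ k hk ih => rw [hnomove k hk, ih]
  have hGq : G q = zs K₁ :=
    tendsto_nhds_unique (hG q) (tendsto_atTop_of_eventually_const hconst)
  -- persistence of being off the boundary
  have hpersist : ∀ k m, k ≤ m → zs k ∉ bd → zs m ∉ bd := by
    intro k m hkm hk
    induction m, hkm using Nat.le_induction with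
    | base => exact hk
    | succ m hm ih =>
      rw [hzss]
      exact (ST m).off _ _ ih
  by_cases hzb : z ∈ bd
  · -- boundary case: use coverage
    have hAlt : ∀ k, zs k ∉ bd ∨ zs k = z := by
      intro k
      induction k with
      | zero => exact Or.inr hzs0
      | succ k ih =>
        rcases ih with hnb | heq
        · exact Or.inl (by rw [hzss]; exact (ST k).off _ _ hnb)
        · by_cases hb : zs (k+1) ∈ bd
          · refine Or.inr ?_
            have : (ST k).P (c k * cl01 t) (zs k) ∈ bd := by rw [← hzss]; exact hb
            have h2 := (ST k).bdfix (c k * cl01 t) (zs k) (heq ▸ hzb) this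
            rw [hzss, h2, heq]
          · exact Or.inl hb
    obtain ⟨k₀, hΛ⟩ := hcover z hzb hζz
    have hesc : ∃ k, zs k ∉ bd := by
      rcases hAlt k₀ with hnb | heq
      · exact ⟨k₀, hnb⟩
      · refine ⟨k₀ + 1, ?_⟩
        rw [hzss, heq]
        exact (ST k₀).expel _ _ (hukpos k₀) hzb hΛ
    obtain ⟨ke, hke⟩ := hesc
    have h1 : zs (max ke K₁) ∉ bd := hpersist ke (max ke K₁) (le_max_left _ _) hke
    have h2 : zs (max ke K₁) = zs K₁ := hconst _ (le_max_right _ _)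
    rw [hGq, ← h2]
    exact h1
  · rw [hGq, ← hconst K₁ le_rfl]
    exact hpersist 0 K₁ (by omega) (hzs0 ▸ hzb)

theorem core_push [CompactSpace Z] {bd : Set Z} {ζ : Z → ℝ}
    (hbd : IsClosed bd)
    (hζlip : LipschitzWith 1 ζ) (hζ0 : ∀ z, 0 ≤ ζ z) (hζ1 : ∀ z, ζ z ≤ 1)
    (H : ∀ p, p ∈ bd → 0 < ζ p → ∀ ρ : ℝ, 0 < ρ →
      ∃ (S : BdPush bd) (ρ' : ℝ), 0 < ρ' ∧ ρ' ≤ ρ ∧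
        (∀ u z, S.P u z ≠ z → dist z p ≤ ρ') ∧ (∀ z, dist z p < ρ' → 0 < S.Λ z)) :
    ∃ G : ℝ × Z → Z, Continuous G ∧ (∀ t z, t ≤ 0 → G (t, z) = z) ∧
      ∀ t z, 0 < t → 0 < ζ z → G (t, z) ∉ bd := by
  classical
  haveI : CompleteSpace Z := complete_of_compact
  have hζdist : ∀ a b : Z, |ζ a - ζ b| ≤ dist a b := by
    intro a b
    have := hζlip.dist_le_mul a b
    rwa [Real.dist_eq, NNReal.coe_one, one_mul] at this
  set β : ℕ → ℝ := fun j => (2⁻¹:ℝ)^j with hβ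
  have hβpos : ∀ j, 0 < β j := fun j => by positivity
  have hβsucc : ∀ j, β (j+1) = β j * 2⁻¹ := fun j => pow_succ _ _
  have hβle : ∀ j m, j ≤ m → β m ≤ β j :=
    fun j m h => pow_le_pow_of_le_one (by norm_num) (by norm_num) h
  set A : ℕ → Set Z := fun j => {z | z ∈ bd ∧ β (j+1) ≤ ζ z ∧ ζ z ≤ β j} with hA
  have hAcpt : ∀ j, IsCompact (A j) := by
    intro j
    apply IsCompact.of_isClosed_subset isCompact_univ _ (subset_univ _)
    have h1 : IsClosed {z : Z | β (j+1) ≤ ζ z} := isClosed_le continuous_const hζlip.continuous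
    have h2 : IsClosed {z : Z | ζ z ≤ β j} := isClosed_le hζlip.continuous continuous_const
    exact hbd.inter (h1.inter h2)
  have hH : ∀ (j : ℕ) (p : ↥(A j)), ∃ (S : BdPush bd) (ρ' : ℝ), 0 < ρ' ∧ ρ' ≤ β (j+1) / 8 ∧
      (∀ u z, S.P u z ≠ z → dist z ↑p ≤ ρ') ∧ (∀ z, dist z ↑p < ρ' → 0 < S.Λ z) := by
    intro j p
    exact H ↑p p.2.1 (lt_of_lt_of_le (hβpos (j+1)) p.2.2.1) _ (by positivity)
  choose SS rad hradpos hradle hsupp hpos using hH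
  have hsub : ∀ j, ∃ t : Finset ↥(A j), A j ⊆ ⋃ p ∈ t, ball (↑p) (rad j p) := by
    intro j
    apply (hAcpt j).elim_finite_subcover (fun p : ↥(A j) => ball (↑p) (rad j p))
      (fun p => isOpen_ball)
    intro z hz
    exact mem_iUnion.2 ⟨⟨z, hz⟩, mem_ball_self (hradpos _ _)⟩
  choose T hT using hsub
  set L : ∀ j : ℕ, List ↥(A j) := fun j => (T j).toList with hL
  set SS' : ℕ → ℕ → BdPush bd := fun j i =>
    if h : i < (L j).length then SS j ((L j).get ⟨i, h⟩) else trivPush bd with hSS'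
  set LO' : ℕ → ℕ → ℝ := fun j i =>
    if i < (L j).length then (7/8) * β (j + 1) else 1 with hLO2
  set HI' : ℕ → ℕ → ℝ := fun j i =>
    if i < (L j).length then 2 * β j else 0 with hHI2
  set ST : ℕ → BdPush bd := fun k => SS' (Nat.unpair k).1 (Nat.unpair k).2 with hST
  set LO : ℕ → ℝ := fun k => LO' (Nat.unpair k).1 (Nat.unpair k).2 with hLO'
  set HI : ℕ → ℝ := fun k => HI' (Nat.unpair k).1 (Nat.unpair k).2 with hHI'
  have hLOpos' : ∀ j i, 0 < LO' j i := by
    intro j i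
    simp only [hLO2]
    split
    · have := hβpos (j + 1); linarith
    · norm_num
  have hLOpos : ∀ k, 0 < LO k := fun k => hLOpos' _ _
  have hmove : ∀ j i u z, (SS' j i).P u z ≠ z →
      ∃ h : i < (L j).length, dist z ↑((L j).get ⟨i, h⟩) ≤ β (j + 1) / 8 := by
    intro j i u z hmv
    simp only [hSS'] at hmv
    by_cases h : i < (L j).length
    · rw [dif_pos h] at hmv
      exact ⟨h, le_trans (hsupp _ _ u z hmv) (hradle _ _)⟩
    · rw [dif_neg h] at hmv
      exact absurd rfl hmv
  have hLOk' : ∀ j i u z, (SS' j i).P u z ≠ z → LO' j i ≤ ζ z := by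
    intro j i u z hmv
    obtain ⟨h, hd⟩ := hmove j i u z hmv
    set p := (L j).get ⟨i, h⟩
    have hp1 : β (j + 1) ≤ ζ ↑p := p.2.2.1
    have h2 := abs_sub_le_iff.mp (hζdist z ↑p)
    simp only [hLO2, if_pos h]
    have hb := hβpos (j + 1)
    linarith [h2.2]
  have hHIk' : ∀ j i u z, (SS' j i).P u z ≠ z → ζ z ≤ HI' j i := by
    intro j i u z hmv
    obtain ⟨h, hd⟩ := hmove j i u z hmv
    set p := (L j).get ⟨i, h⟩
    have hp2 : ζ ↑p ≤ β j := p.2.2.2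
    have h2 := abs_sub_le_iff.mp (hζdist z ↑p)
    simp only [hHI2, if_pos h]
    have hb2 : β (j + 1) = β j * 2⁻¹ := hβsucc _
    have hb := hβpos j
    linarith [h2.1]
  have hLOk : ∀ k u z, (ST k).P u z ≠ z → LO k ≤ ζ z := fun k => hLOk' _ _
  have hHIk : ∀ k u z, (ST k).P u z ≠ z → ζ z ≤ HI k := fun k => hHIk' _ _
  have hHIfin : ∀ δ : ℝ, 0 < δ → {k | δ ≤ HI k}.Finite := by
    intro δ hδ
    obtain ⟨J, hJ⟩ := exists_pow_lt_of_lt_one (half_pos hδ) (by norm_num : (2⁻¹:ℝ) < 1)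
    set M := ((Finset.range J).sup fun j => (L j).length) with hM
    apply Set.Finite.subset (Finset.finite_toSet
      (Finset.image (fun ji : ℕ × ℕ => Nat.pair ji.1 ji.2) ((Finset.range J) ×ˢ (Finset.range M))))
    intro k hk
    simp only [mem_setOf_eq, hHI', hHI2] at hk
    have hif : (Nat.unpair k).2 < (L (Nat.unpair k).1).length := by
      by_contra hno
      rw [if_neg hno] at hk
      linarith
    rw [if_pos hif] at hk
    have hjJ : (Nat.unpair k).1 < J := by
      by_contra hno
      push_neg at hno
      have h1 := hβle J (Nat.unpair k).1 hno
      have hJ' : β J < δ / 2 := hJ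
      linarith
    have hiM : (Nat.unpair k).2 < M := by
      calc (Nat.unpair k).2 < (L (Nat.unpair k).1).length := hif
      _ ≤ M := Finset.le_sup (f := fun j => (L j).length) (Finset.mem_range.2 hjJ)
    simp only [Finset.coe_image, Set.mem_image]
    refine ⟨((Nat.unpair k).1, (Nat.unpair k).2), ?_, Nat.pair_unpair k⟩
    simp only [Finset.mem_coe, Finset.mem_product, Finset.mem_range]
    exact ⟨hjJ, hiM⟩
  have hann : ∀ a : ℝ, 0 < a → a ≤ 1 → ∃ j : ℕ, β (j+1) ≤ a ∧ a ≤ β j := by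
    intro a ha h1
    have hex2 : ∃ m, (2⁻¹:ℝ)^m < a := exists_pow_lt_of_lt_one ha (by norm_num)
    set m0 := Nat.find hex2 with hm0def
    have hm0 : (2⁻¹:ℝ)^m0 < a := Nat.find_spec hex2
    have hm0ne : m0 ≠ 0 := by
      intro hcon
      rw [hcon, pow_zero] at hm0
      linarith
    obtain ⟨j, hj⟩ := Nat.exists_eq_succ_of_ne_zero hm0ne
    refine ⟨j, ?_, ?_⟩
    · have h2 : β (j+1) = (2⁻¹:ℝ)^m0 := by rw [hj]
      rw [h2]; exact hm0.le
    · have := Nat.find_min hex2 (m := j) (by omega)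
      push_neg at this
      exact this
  have hST_pair : ∀ j i, ST (Nat.pair j i) = SS' j i := by
    intro j i
    simp only [hST, Nat.unpair_pair]
  have hcover : ∀ z, z ∈ bd → 0 < ζ z → ∃ k, 0 < (ST k).Λ z := by
    intro z hzb hζz
    obtain ⟨j, hj1, hj2⟩ := hann (ζ z) hζz (hζ1 z)
    have hzA : z ∈ A j := ⟨hzb, hj1, hj2⟩
    have hzU := hT j hzA
    rw [mem_iUnion₂] at hzU
    obtain ⟨p, hpT, hzball⟩ := hzU
    have hpL : p ∈ L j := Finset.mem_toList.2 hpT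
    obtain ⟨idx, hget⟩ := List.mem_iff_get.mp hpL
    refine ⟨Nat.pair j idx.1, ?_⟩
    rw [hST_pair]
    have hSS'eq : SS' j idx.1 = SS j ((L j).get idx) := by
      simp only [hSS']
      rw [dif_pos idx.2]
    rw [hSS'eq, hget]
    exact hpos j p z hzball
  have hε : ∀ k, 0 < (2⁻¹:ℝ)^(k+2) * min (LO k) 1 :=
    fun k => mul_pos (by positivity) (lt_min (hLOpos k) one_pos)
  have hdisp0 : ∀ k, ∃ c, 0 < c ∧ ∀ u, u ≤ c → ∀ z,
      dist ((ST k).P u z) z ≤ (2⁻¹:ℝ)^(k+2) * min (LO k) 1 :=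
    fun k => (ST k).disp (hε k)
  choose c hcpos hcd using hdisp0
  exact core_from_stages hζlip hζ0 ST LO HI hLOpos hLOk hHIk hHIfin hcover c hcpos hcd

end AuxiliaryMachinery

section CubeGeometry

-- geometry lemmas
lemma cc_bd_compact {n : ℕ} (C : CrumpledCube n) : IsCompact C.bd := by
  obtain ⟨e, hec, hei, her⟩ := C.exists_embedding
  haveI : CompactSpace ↥(Sph (n-1)) :=
    isCompact_iff_compactSpace.mp (isCompact_sphere (0 : Amb (n-1)) 1)
  rw [← her]
  exact isCompact_range hec

lemma cc_bd_nonempty {n : ℕ} (C : CrumpledCube n) : C.bd.Nonempty := by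
  obtain ⟨e, hec, hei, her⟩ := C.exists_embedding
  haveI : Nonempty (Fin (n - 1 + 1)) := ⟨⟨0, Nat.succ_pos _⟩⟩
  haveI : Nontrivial (Amb (n-1)) := by infer_instance
  have hs : (Sph (n-1)).Nonempty := NormedSpace.sphere_nonempty.mpr zero_le_one
  haveI : Nonempty ↥(Sph (n-1)) := hs.to_subtype
  rw [← her]
  exact Set.range_nonempty e

lemma cc_int_subset {n : ℕ} (C : CrumpledCube n) : C.int ⊆ Sph n \ C.bd := by
  obtain ⟨x, hx, hint⟩ := C.int_component
  rw [hint]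
  exact connectedComponentIn_subset _ _

lemma cc_carrier_subset_sphere {n : ℕ} (C : CrumpledCube n) : C.carrier ⊆ Sph n := by
  intro z hz
  rcases hz with h | h
  · exact C.bd_subset_sphere h
  · exact (cc_int_subset C h).1

lemma cc_carrier_closed {n : ℕ} (C : CrumpledCube n) : IsClosed C.carrier := by
  obtain ⟨x, hx, hint⟩ := C.int_component
  have hbdc : IsClosed C.bd := (cc_bd_compact C).isClosed
  have hcl : closure C.int ⊆ C.carrier := by
    intro z hz
    by_cases hzb : z ∈ C.bd
    · exact Or.inl hzb
    · have hzS : z ∈ Sph n := by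
        have h1 : closure C.int ⊆ closure (Sph n) :=
          closure_mono (fun y hy => (cc_int_subset C hy).1)
        have h2 : closure (Sph n) = Sph n := IsClosed.closure_eq (by
          exact isClosed_sphere)
        exact h2 ▸ h1 hz
      have hzSd : z ∈ Sph n \ C.bd := ⟨hzS, hzb⟩
      have himg : C.int = Subtype.val '' (connectedComponent (⟨x, hx⟩ : ↥(Sph n \ C.bd))) := by
        rw [hint, connectedComponentIn_eq_image hx]
      have hmem : (⟨z, hzSd⟩ : ↥(Sph n \ C.bd)) ∈
          closure (connectedComponent (⟨x, hx⟩ : ↥(Sph n \ C.bd))) := by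
        rw [closure_subtype]
        rw [← himg]
        exact hz
      rw [isClosed_connectedComponent.closure_eq] at hmem
      have : z ∈ Subtype.val '' (connectedComponent (⟨x, hx⟩ : ↥(Sph n \ C.bd))) :=
        ⟨⟨z, hzSd⟩, hmem, rfl⟩
      rw [← himg] at this
      exact Or.inr this
  have : closure C.carrier ⊆ C.carrier := by
    rw [CrumpledCube.carrier, closure_union, hbdc.closure_eq]
    exact Set.union_subset (fun z hz => Or.inl hz) hcl
  exact isClosed_of_closure_subset this

lemma cc_carrier_compact {n : ℕ} (C : CrumpledCube n) : IsCompact C.carrier :=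
  IsCompact.of_isClosed_subset (isCompact_sphere 0 1) (cc_carrier_closed C)
    (cc_carrier_subset_sphere C)

lemma cc_collared_isOpen {n : ℕ} (D : CrumpledCube n) :
    IsOpen {q : ↥D.carrier | LocallyCollaredAt D q} := by
  rw [isOpen_iff_forall_mem_open]
  rintro q ⟨N, hNo, hqN, φ, hφ⟩
  exact ⟨N, fun q' hq' => ⟨N, hNo, hq', φ, hφ⟩, hNo, hqN⟩

lemma cc_wild_iff {n : ℕ} (D : CrumpledCube n) (z : ↥D.carrier) :
    (z : Amb n) ∈ wildSet D ↔ ((z : Amb n) ∈ D.bd ∧ ¬ LocallyCollaredAt D z) := by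
  constructor
  · rintro ⟨hp, hnc⟩
    refine ⟨hp, ?_⟩
    have : (⟨(z : Amb n), D.bd_subset_carrier hp⟩ : ↥D.carrier) = z := Subtype.ext rfl
    rwa [this] at hnc
  · rintro ⟨hp, hnc⟩
    refine ⟨hp, ?_⟩
    have : (⟨(z : Amb n), D.bd_subset_carrier hp⟩ : ↥D.carrier) = z := Subtype.ext rfl
    rwa [this]

lemma cc_wildset_closed {n : ℕ} (D : CrumpledCube n) :
    IsClosed {z : ↥D.carrier | (z : Amb n) ∈ wildSet D} := by
  have heq : {z : ↥D.carrier | (z : Amb n) ∈ wildSet D} =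
      {z : ↥D.carrier | (z : Amb n) ∈ D.bd} ∩ {q : ↥D.carrier | LocallyCollaredAt D q}ᶜ := by
    ext z
    simp only [mem_setOf_eq, mem_inter_iff, mem_compl_iff]
    exact cc_wild_iff D z
  rw [heq]
  apply IsClosed.inter
  · exact (cc_bd_compact D).isClosed.preimage continuous_subtype_val
  · exact (cc_collared_isOpen D).isClosed_compl

lemma collar_push {n : ℕ} (D : CrumpledCube n)
    (p : ↥D.carrier) (hcol : LocallyCollaredAt D p) (ρ : ℝ) (hρ : 0 < ρ) :
    ∃ (S : BdPush {z : ↥D.carrier | (z : Amb n) ∈ D.bd}) (ρ' : ℝ), 0 < ρ' ∧ ρ' ≤ ρ ∧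
      (∀ u z, S.P u z ≠ z → dist z p ≤ ρ') ∧ (∀ z, dist z p < ρ' → 0 < S.Λ z) := by
  classical
  obtain ⟨N, hNopen, hpN, φ, hφ⟩ := hcol
  obtain ⟨ρ₁, hρ₁, hball⟩ := Metric.isOpen_iff.mp hNopen p hpN
  set ρ' : ℝ := min (ρ₁ / 2) ρ with hρ'
  have hρ'pos : 0 < ρ' := lt_min (by linarith) hρ
  have hρ'lt : ρ' < ρ₁ := lt_of_le_of_lt (min_le_left _ _) (by linarith)
  have hρ'le : ρ' ≤ ρ := min_le_right _ _
  set Λ : ↥D.carrier → ℝ := fun z => max 0 (1 - dist z p / ρ') with hΛ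
  have hΛcont : Continuous Λ := by
    apply continuous_const.max
    have : Continuous fun z : ↥D.carrier => dist z p := continuous_id.dist continuous_const
    fun_prop
  have hΛnonneg : ∀ z, 0 ≤ Λ z := fun z => le_max_left _ _
  have hΛpos : ∀ z, dist z p < ρ' → 0 < Λ z := by
    intro z hd
    simp only [hΛ, lt_max_iff]
    right
    rw [sub_pos, div_lt_one hρ'pos]
    exact hd
  have hΛzero : ∀ z, ρ' ≤ dist z p → Λ z = 0 := by
    intro z hd
    simp only [hΛ, max_eq_left_iff]
    rw [sub_nonpos, le_div_iff₀ hρ'pos, one_mul]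
    exact hd
  have hΛball : ∀ z, Λ z ≠ 0 → z ∈ N := by
    intro z hz
    have hd : dist z p < ρ' := by
      by_contra hno
      push_neg at hno
      exact hz (hΛzero z hno)
    exact hball (lt_trans hd (lt_of_le_of_lt (min_le_left _ _) (by linarith)))
  -- height characterization
  have hbdiff : ∀ ν : ↥N, (((ν : ↥D.carrier) : Amb n) ∈ D.bd ↔ ((φ ν).2 : ℝ) = 0) := by
    intro ν
    constructor
    · intro hx
      rw [hφ ν hx]
    · intro h0
      set b := (φ ν).1 with hb
      have hbN : (b : ↥D.carrier) ∈ N := b.2.1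
      have hbbd : ((b : ↥D.carrier) : Amb n) ∈ D.bd := b.2.2
      set ν' : ↥N := ⟨(b : ↥D.carrier), hbN⟩ with hν'
      have hφν' := hφ ν' hbbd
      have heq : φ ν = φ ν' := by
        rw [hφν']
        apply Prod.ext
        · apply Subtype.ext
          rfl
        · apply Subtype.ext
          exact h0
      have := φ.injective heq
      rw [this]
      exact hbbd
  -- the new height
  have hIco : ∀ (u : ℝ) (ν : ↥N),
      ((φ ν).2 : ℝ) + (cl01 (u * Λ ν) / 2) * (1 - ((φ ν).2 : ℝ)) ∈ Set.Ico (0:ℝ) 1 := by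
    intro u ν
    have hs := (φ ν).2.2
    obtain ⟨hs0, hs1⟩ := hs
    have hc0 : 0 ≤ cl01 (u * Λ ν) / 2 := by linarith [cl01_nonneg (u * Λ ν)]
    have hc1 : cl01 (u * Λ ν) / 2 ≤ 1/2 := by linarith [cl01_le_one (u * Λ ν)]
    constructor
    · nlinarith
    · nlinarith
  set inner : ℝ × ↥N → ↥N := fun q =>
    φ.symm ((φ q.2).1, ⟨((φ q.2).2 : ℝ) + (cl01 (q.1 * Λ q.2) / 2) * (1 - ((φ q.2).2 : ℝ)),
      hIco q.1 q.2⟩) with hinner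
  have hinnercont : Continuous inner := by
    apply φ.symm.continuous.comp
    have hφc : Continuous fun q : ℝ × ↥N => φ q.2 := φ.continuous.comp continuous_snd
    have hsc : Continuous fun q : ℝ × ↥N => ((φ q.2).2 : ℝ) :=
      continuous_subtype_val.comp (continuous_snd.comp hφc)
    have hΛc : Continuous fun q : ℝ × ↥N => Λ (q.2 : ↥D.carrier) :=
      hΛcont.comp (continuous_subtype_val.comp continuous_snd)
    have hclc : Continuous fun q : ℝ × ↥N => cl01 (q.1 * Λ (q.2 : ↥D.carrier)) :=
      cl01_continuous.comp (continuous_fst.mul hΛc)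
    apply Continuous.prodMk
    · exact continuous_fst.comp hφc
    · apply Continuous.subtype_mk
      fun_prop
  set P : ℝ → ↥D.carrier → ↥D.carrier := fun u z =>
    if h : z ∈ N then ↑(inner (u, ⟨z, h⟩)) else z with hP
  -- height of the image
  have hheight : ∀ (u : ℝ) (z : ↥D.carrier) (h : z ∈ N),
      ((φ ⟨(inner (u, ⟨z, h⟩) : ↥D.carrier), (inner (u, ⟨z, h⟩)).2⟩).2 : ℝ) =
        ((φ ⟨z, h⟩).2 : ℝ) + (cl01 (u * Λ z) / 2) * (1 - ((φ ⟨z, h⟩).2 : ℝ)) := by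
    intro u z h
    have : (⟨(inner (u, ⟨z, h⟩) : ↥D.carrier), (inner (u, ⟨z, h⟩)).2⟩ : ↥N) = inner (u, ⟨z, h⟩) := rfl
    rw [this, hinner]
    simp only [Homeomorph.apply_symm_apply]
  -- P is the identity wherever the clamp vanishes
  have hPid : ∀ (u : ℝ) (z : ↥D.carrier), cl01 (u * Λ z) = 0 → P u z = z := by
    intro u z hz
    by_cases h : z ∈ N
    · simp only [hP]
      rw [dif_pos h]
      have harg : ((φ ⟨z, h⟩).1,
          (⟨((φ ⟨z, h⟩).2 : ℝ) + (cl01 (u * Λ z) / 2) * (1 - ((φ ⟨z, h⟩).2 : ℝ)),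
            hIco u ⟨z, h⟩⟩ : ↥(Set.Ico (0:ℝ) 1))) = φ ⟨z, h⟩ := by
        apply Prod.ext
        · rfl
        · apply Subtype.ext
          simp only [hz]
          ring
      have : inner (u, ⟨z, h⟩) = ⟨z, h⟩ := by
        rw [hinner]
        simp only
        rw [harg, Homeomorph.symm_apply_apply]
      rw [this]
    · simp only [hP]
      rw [dif_neg h]
  have hsupp' : ∀ (u : ℝ) (z : ↥D.carrier), P u z ≠ z → dist z p ≤ ρ' := by
    intro u z hne
    by_contra hgt
    push_neg at hgt
    exact hne (hPid u z (by rw [hΛzero z hgt.le, mul_zero, cl01_of_nonpos le_rfl]))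
  have hnonpos : ∀ (u : ℝ) (z : ↥D.carrier), u ≤ 0 → P u z = z := by
    intro u z hu
    apply hPid
    have h1 : u * Λ z ≤ 0 := by
      have := mul_le_mul_of_nonneg_right hu (hΛnonneg z)
      rwa [zero_mul] at this
    exact cl01_of_nonpos h1
  have hoff : ∀ (u : ℝ) (z : ↥D.carrier), z ∉ {z : ↥D.carrier | (z : Amb n) ∈ D.bd} →
      P u z ∉ {z : ↥D.carrier | (z : Amb n) ∈ D.bd} := by
    intro u z hz
    by_cases h : z ∈ N
    · simp only [hP]
      rw [dif_pos h]
      intro hmem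
      have hs := (φ ⟨z, h⟩).2.2
      have hspos : 0 < ((φ ⟨z, h⟩).2 : ℝ) := by
        rcases lt_or_eq_of_le hs.1 with h' | h'
        · exact h'
        · exact absurd ((hbdiff ⟨z, h⟩).mpr h'.symm) hz
      have hmem' : ((inner (u, ⟨z, h⟩) : ↥D.carrier) : Amb n) ∈ D.bd := hmem
      have h0 := (hbdiff ⟨(inner (u, ⟨z, h⟩) : ↥D.carrier), (inner (u, ⟨z, h⟩)).2⟩).mp hmem'
      rw [hheight u z h] at h0
      have hc0 : 0 ≤ cl01 (u * Λ z) / 2 := by linarith [cl01_nonneg (u * Λ z)]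
      have hs1 : ((φ ⟨z, h⟩).2 : ℝ) < 1 := hs.2
      nlinarith
    · simp only [hP]
      rw [dif_neg h]
      exact hz
  have hbdfix : ∀ (u : ℝ) (z : ↥D.carrier), z ∈ {z : ↥D.carrier | (z : Amb n) ∈ D.bd} →
      P u z ∈ {z : ↥D.carrier | (z : Amb n) ∈ D.bd} → P u z = z := by
    intro u z hz hmem
    by_cases h : z ∈ N
    · have hs0 : ((φ ⟨z, h⟩).2 : ℝ) = 0 := (hbdiff ⟨z, h⟩).mp hz
      have hPz : P u z = ↑(inner (u, ⟨z, h⟩)) := by simp only [hP]; rw [dif_pos h]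
      have hmem' : ((inner (u, ⟨z, h⟩) : ↥D.carrier) : Amb n) ∈ D.bd := by
        rw [← hPz]; exact hmem
      have h0 := (hbdiff ⟨(inner (u, ⟨z, h⟩) : ↥D.carrier), (inner (u, ⟨z, h⟩)).2⟩).mp hmem'
      rw [hheight u z h, hs0] at h0
      apply hPid
      linarith
    · simp only [hP]; rw [dif_neg h]
  have hexpel : ∀ (u : ℝ) (z : ↥D.carrier), 0 < u →
      z ∈ {z : ↥D.carrier | (z : Amb n) ∈ D.bd} → 0 < Λ z →
      P u z ∉ {z : ↥D.carrier | (z : Amb n) ∈ D.bd} := by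
    intro u z hu hz hΛz
    have h : z ∈ N := hΛball z (ne_of_gt hΛz)
    have hs0 : ((φ ⟨z, h⟩).2 : ℝ) = 0 := (hbdiff ⟨z, h⟩).mp hz
    simp only [hP]
    rw [dif_pos h]
    intro hmem
    have hmem' : ((inner (u, ⟨z, h⟩) : ↥D.carrier) : Amb n) ∈ D.bd := hmem
    have h0 := (hbdiff ⟨(inner (u, ⟨z, h⟩) : ↥D.carrier), (inner (u, ⟨z, h⟩)).2⟩).mp hmem'
    rw [hheight u z h, hs0] at h0
    have hcpos : 0 < cl01 (u * Λ z) := cl01_pos (mul_pos hu hΛz)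
    nlinarith
  have hcont : Continuous (fun q : ℝ × ↥D.carrier => P q.1 q.2) := by
    have hcontOn1 : ContinuousOn (fun q : ℝ × ↥D.carrier => P q.1 q.2)
        ((univ : Set ℝ) ×ˢ N) := by
      rw [continuousOn_iff_continuous_restrict]
      have hres : (((univ : Set ℝ) ×ˢ N).domRestrict (fun q : ℝ × ↥D.carrier => P q.1 q.2))
          = fun q : ↥((univ : Set ℝ) ×ˢ N) =>
              ((inner ((q : ℝ × ↥D.carrier).1, ⟨(q : ℝ × ↥D.carrier).2, q.2.2⟩) : ↥N) : ↥D.carrier) := by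
        funext q
        simp only [Set.domRestrict_apply, hP]
        rw [dif_pos (Set.mem_prod.mp q.2).2]
      rw [hres]
      apply continuous_subtype_val.comp
      apply hinnercont.comp
      apply Continuous.prodMk
      · exact continuous_fst.comp continuous_subtype_val
      · exact Continuous.subtype_mk (continuous_snd.comp continuous_subtype_val) _
    have hcontOn2 : ContinuousOn (fun q : ℝ × ↥D.carrier => P q.1 q.2)
        ((univ : Set ℝ) ×ˢ (closedBall p ρ')ᶜ) := by
      apply ContinuousOn.congr (continuous_snd.continuousOn)
      intro q hq
      have hgt : ρ' < dist q.2 p := by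
        have := hq.2
        simp only [mem_compl_iff, mem_closedBall, not_le] at this
        exact this
      exact hPid q.1 q.2 (by rw [hΛzero q.2 hgt.le, mul_zero, cl01_of_nonpos le_rfl])
    rw [continuous_iff_continuousAt]
    intro q
    by_cases hq : q.2 ∈ N
    · exact hcontOn1.continuousAt ((isOpen_univ.prod hNopen).mem_nhds ⟨mem_univ _, hq⟩)
    · have hq' : q.2 ∈ (closedBall p ρ')ᶜ := by
        simp only [mem_compl_iff, mem_closedBall, not_le]
        have h1 : ¬ dist q.2 p < ρ₁ := fun hc => hq (hball hc)
        push_neg at h1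
        linarith
      exact hcontOn2.continuousAt
        ((isOpen_univ.prod isClosed_closedBall.isOpen_compl).mem_nhds ⟨mem_univ _, hq'⟩)
  exact ⟨⟨P, Λ, hcont, hnonpos, hoff, hbdfix, hexpel⟩, ρ', hρ'pos, hρ'le, hsupp', hΛpos⟩

lemma cc_exists_G {n : ℕ} (D : CrumpledCube n) :
    ∃ (ζ : ↥D.carrier → ℝ) (G : ℝ × ↥D.carrier → ↥D.carrier),
      Continuous G ∧ (∀ t z, t ≤ 0 → G (t, z) = z) ∧
      (∀ t z, 0 < t → 0 < ζ z → G (t, z) ∉ {z : ↥D.carrier | (z : Amb n) ∈ D.bd}) ∧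
      (∀ z : ↥D.carrier, (z : Amb n) ∉ wildSet D → 0 < ζ z) := by
  classical
  haveI : CompactSpace ↥D.carrier := isCompact_iff_compactSpace.mp (cc_carrier_compact D)
  set w : Set ↥D.carrier := {z : ↥D.carrier | (z : Amb n) ∈ wildSet D} with hw
  have hwclosed : IsClosed w := cc_wildset_closed D
  have hbdclosed : IsClosed {z : ↥D.carrier | (z : Amb n) ∈ D.bd} :=
    (cc_bd_compact D).isClosed.preimage continuous_subtype_val
  -- choose the weight function ζ
  obtain ⟨ζ, hζlip, hζ0, hζ1, hζne, hζpos⟩ :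
      ∃ ζ : ↥D.carrier → ℝ, LipschitzWith 1 ζ ∧ (∀ z, 0 ≤ ζ z) ∧ (∀ z, ζ z ≤ 1) ∧
        (∀ z, 0 < ζ z → z ∉ w) ∧ (∀ z, z ∉ w → 0 < ζ z) := by
    by_cases hwne : w.Nonempty
    · refine ⟨fun z => min (Metric.infDist z w) 1, ?_, ?_, ?_, ?_, ?_⟩
      · apply LipschitzWith.of_dist_le_mul
        intro a b
        rw [NNReal.coe_one, one_mul, Real.dist_eq]
        have hinf : |Metric.infDist a w - Metric.infDist b w| ≤ dist a b := by
          rw [abs_sub_le_iff]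
          constructor
          · have := Metric.infDist_le_infDist_add_dist (s := w) (x := a) (y := b)
            linarith
          · have := Metric.infDist_le_infDist_add_dist (s := w) (x := b) (y := a)
            rw [dist_comm] at this
            linarith
        have h1 : min (Metric.infDist a w) 1 - min (Metric.infDist b w) 1 ≤
            |Metric.infDist a w - Metric.infDist b w| := by
          rcases le_total (Metric.infDist a w) 1 with ha | ha <;>
            rcases le_total (Metric.infDist b w) 1 with hb | hb <;>
            simp only [min_eq_left, min_eq_right, ha, hb] <;>
            [linarith [le_abs_self (Metric.infDist a w - Metric.infDist b w)];
             linarith [abs_nonneg (Metric.infDist a w - Metric.infDist b w)];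
             linarith [le_abs_self (Metric.infDist a w - Metric.infDist b w)];
             linarith [abs_nonneg (Metric.infDist a w - Metric.infDist b w)]]
        have h2 : min (Metric.infDist b w) 1 - min (Metric.infDist a w) 1 ≤
            |Metric.infDist a w - Metric.infDist b w| := by
          rcases le_total (Metric.infDist a w) 1 with ha | ha <;>
            rcases le_total (Metric.infDist b w) 1 with hb | hb <;>
            simp only [min_eq_left, min_eq_right, ha, hb] <;>
            [linarith [neg_abs_le (Metric.infDist a w - Metric.infDist b w)];
             linarith [neg_abs_le (Metric.infDist a w - Metric.infDist b w)];
             linarith [abs_nonneg (Metric.infDist a w - Metric.infDist b w)];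
             linarith [abs_nonneg (Metric.infDist a w - Metric.infDist b w)]]
        rw [abs_sub_le_iff]
        exact ⟨le_trans h1 hinf, le_trans h2 hinf⟩
      · exact fun z => le_min Metric.infDist_nonneg zero_le_one
      · exact fun z => min_le_right _ _
      · intro z hz hzw
        simp only [Metric.infDist_zero_of_mem hzw] at hz
        simp at hz
      · intro z hz
        have := (hwclosed.notMem_iff_infDist_pos hwne).mp hz
        exact lt_min this one_pos
    · refine ⟨fun _ => 1, ?_, fun _ => zero_le_one, fun _ => le_rfl, ?_, ?_⟩
      · apply LipschitzWith.of_dist_le_mul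
        intro a b
        simp [dist_self]
      · intro z _ hzw
        exact hwne ⟨z, hzw⟩
      · intro z _
        exact one_pos
  have H : ∀ p, p ∈ {z : ↥D.carrier | (z : Amb n) ∈ D.bd} → 0 < ζ p → ∀ ρ : ℝ, 0 < ρ →
      ∃ (S : BdPush {z : ↥D.carrier | (z : Amb n) ∈ D.bd}) (ρ' : ℝ), 0 < ρ' ∧ ρ' ≤ ρ ∧
        (∀ u z, S.P u z ≠ z → dist z p ≤ ρ') ∧ (∀ z, dist z p < ρ' → 0 < S.Λ z) := by
    intro p hp hζp ρ hρ
    have hpw : p ∉ w := hζne p hζp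
    have hcol : LocallyCollaredAt D p := by
      by_contra hnc
      exact hpw ((cc_wild_iff D p).mpr ⟨hp, hnc⟩)
    exact collar_push D p hcol ρ hρ
  obtain ⟨G, hGc, hGid, hGoff⟩ := core_push hbdclosed hζlip hζ0 hζ1 H
  exact ⟨ζ, G, hGc, hGid, hGoff, fun z hz => hζpos z hz⟩

end CubeGeometry

/-- **Theorem 5.1.** Let `h : Bd C → Bd D` be a homeomorphism with `W_D ⊆ h(W_C)`, set
`X = h⁻¹(W_D)`, and let `(C_X, h_X)` be a standard flattening of `C` relative to `X`.
Then `(C,D,h) ∈ 𝒲_n` iff `(C_X, D, h ∘ h_X⁻¹) ∈ 𝒲_n`. -/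
theorem stmt11 (n : ℕ) (hn : 2 ≤ n) (C D : CrumpledCube n) (h : ↥C.bd ≃ₜ ↥D.bd)
    (hWD : wildSet D ⊆ bdImage h (wildSet C))
    (X : Set (Amb n))
    (hXdef : X = {x : Amb n | ∃ hx : x ∈ C.bd, ((h ⟨x, hx⟩ : ↥D.bd) : Amb n) ∈ wildSet D})
    (CX : CrumpledCube n) (hX : ↥C.bd ≃ₜ ↥CX.bd)
    (hsf : IsStandardFlattening C X CX hX) :
    MemW C D h ↔ MemW CX D (hX.symm.trans h) := by
  classical
  obtain ⟨⟨m, hmc, hmbd, hmpre⟩, hfix, hsub, hcoll, r, hrc, hrmem, hrfix, hFex, hrbd, hrfib⟩ := hsf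
  constructor
  · -- the hard direction: from a map C → D produce a map CX → D
    rintro ⟨f, hfc, hfbd, hfpre⟩
    obtain ⟨ζ, G, hGc, hGid, hGoff, hζwild⟩ := cc_exists_G D
    set rr : ↥CX.carrier → ↥C.carrier := fun y => ⟨(↑(r y) : Amb n), hrmem y⟩ with hrr
    have rrcont : Continuous rr := (continuous_subtype_val.comp hrc).subtype_mk _
    have hr_bd : ∀ (y : ↥CX.carrier) (hy : (↑y : Amb n) ∈ CX.bd),
        (↑(r y) : Amb n) = ↑(hX.symm ⟨(↑y : Amb n), hy⟩) := by
      intro y hy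
      have h1 : hX (hX.symm ⟨(↑y : Amb n), hy⟩) = ⟨(↑y : Amb n), hy⟩ := hX.apply_symm_apply _
      have hb : (↑(hX (hX.symm ⟨(↑y : Amb n), hy⟩)) : Amb n) ∈ CX.carrier := by
        rw [h1]; exact y.2
      have h2 := hrbd (hX.symm ⟨(↑y : Amb n), hy⟩) hb
      have h3 : (⟨(↑(hX (hX.symm ⟨(↑y : Amb n), hy⟩)) : Amb n), hb⟩ : ↥CX.carrier) = y := by
        apply Subtype.ext
        show (↑(hX (hX.symm ⟨(↑y : Amb n), hy⟩)) : Amb n) = ↑y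
        exact congrArg Subtype.val h1
      rw [h3] at h2
      exact h2
    have hgbd_val : ∀ (y : ↥CX.carrier) (hy : (↑y : Amb n) ∈ CX.bd),
        (↑(f (rr y)) : Amb n) = ↑((hX.symm.trans h) ⟨(↑y : Amb n), hy⟩) := by
      intro y hy
      have hx' : (↑(rr y) : Amb n) ∈ C.bd := by
        show (↑(r y) : Amb n) ∈ C.bd
        rw [hr_bd y hy]
        exact (hX.symm ⟨(↑y : Amb n), hy⟩).2
      rw [hfbd (rr y) hx']
      have h4 : (⟨(↑(rr y) : Amb n), hx'⟩ : ↥C.bd) = hX.symm ⟨(↑y : Amb n), hy⟩ :=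
        Subtype.ext (hr_bd y hy)
      rw [h4]
      simp [Homeomorph.trans_apply]
    have hL1 : ∀ y : ↥CX.carrier, (↑y : Amb n) ∉ CX.bd → (↑(r y) : Amb n) ∈ C.bd →
        (↑(r y) : Amb n) ∈ C.bd \ X := by
      intro y hy hb
      by_cases hry : r y = y
      · have hvy : (↑(r y) : Amb n) = ↑y := congrArg Subtype.val hry
        have hyb : (↑y : Amb n) ∈ C.bd := by rw [← hvy]; exact hb
        have hbcar : (↑(hX ⟨(↑y : Amb n), hyb⟩) : Amb n) ∈ CX.carrier :=
          CX.bd_subset_carrier (hX ⟨(↑y : Amb n), hyb⟩).2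
        have hne : (⟨(↑(hX ⟨(↑y : Amb n), hyb⟩) : Amb n), hbcar⟩ : ↥CX.carrier) ≠ y := by
          intro hcon
          apply hy
          rw [← congrArg Subtype.val hcon]
          exact (hX ⟨(↑y : Amb n), hyb⟩).2
        have hr' : r ⟨(↑(hX ⟨(↑y : Amb n), hyb⟩) : Amb n), hbcar⟩ = r y := by
          apply Subtype.ext
          rw [hrbd ⟨(↑y : Amb n), hyb⟩ hbcar, hvy]
        exact hrfib y ⟨_, hne, hr'⟩
      · exact hrfib y ⟨r y, hry, hrfix (r y) (hrmem y)⟩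
    refine ⟨fun y => G (Metric.infDist (↑y : Amb n) CX.bd, f (rr y)), ?_, ?_, ?_⟩
    · apply hGc.comp
      exact ((Metric.continuous_infDist_pt _).comp continuous_subtype_val).prodMk
        (hfc.comp rrcont)
    · intro y hy
      have hτ : Metric.infDist (↑y : Amb n) CX.bd = 0 := Metric.infDist_zero_of_mem hy
      beta_reduce
      rw [hτ, hGid 0 (f (rr y)) le_rfl]
      exact hgbd_val y hy
    · intro y
      constructor
      · intro hmem
        by_contra hy
        have hτpos : 0 < Metric.infDist (↑y : Amb n) CX.bd :=
          ((cc_bd_compact CX).isClosed.notMem_iff_infDist_pos (cc_bd_nonempty CX)).mp hy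
        have hζp : 0 < ζ (f (rr y)) := by
          apply hζwild
          intro hwild
          have hwild2 := hwild
          obtain ⟨hwbd, -⟩ := hwild2
          have hrbdC : (↑(rr y) : Amb n) ∈ C.bd := (hfpre (rr y)).mp hwbd
          have hXin : (↑(r y) : Amb n) ∈ X := by
            rw [hXdef]
            refine ⟨hrbdC, ?_⟩
            rw [← hfbd (rr y) hrbdC]
            exact hwild
          exact (hL1 y hy hrbdC).2 hXin
        exact (hGoff _ _ hτpos hζp) hmem
      · intro hy
        have hτ : Metric.infDist (↑y : Amb n) CX.bd = 0 := Metric.infDist_zero_of_mem hy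
        beta_reduce
        rw [hτ, hGid 0 (f (rr y)) le_rfl, hgbd_val y hy]
        exact ((hX.symm.trans h) ⟨(↑y : Amb n), hy⟩).2
  · -- the easy direction: compose with the map associated with (C, CX, hX)
    rintro ⟨g, hgc, hgbd, hgpre⟩
    refine ⟨fun x => g (m x), hgc.comp hmc, ?_, ?_⟩
    · intro x hx
      have hmb : (↑(m x) : Amb n) ∈ CX.bd := by
        rw [hmbd x hx]
        exact (hX ⟨(↑x : Amb n), hx⟩).2
      rw [hgbd (m x) hmb]
      have h3 : (⟨(↑(m x) : Amb n), hmb⟩ : ↥CX.bd) = hX ⟨(↑x : Amb n), hx⟩ :=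
        Subtype.ext (hmbd x hx)
      rw [h3]
      simp [Homeomorph.trans_apply]
    · intro x
      exact (hgpre (m x)).trans (hmpre x)
end
end

section
/- Let n ≥ 5. If (C,D,h) ∈ W_n and the sewing space C ∪_h D is homeomorphic to S^n, then D contains disjoint homotopy taming sets: there exist subsets T and T′ of Bd D, each a homotopy taming set for D, with T ∩ T′ = ∅. (Theorem on disjoint homotopy taming sets, Section 6) -/
noncomputable section

open Metric Set unitInterval

/-- The identifications defining the sewing of two crumpled cubes along a boundary
homeomorphism `θ`. -/
def SewRel {n : ℕ} (C D : CrumpledCube n) (θ : ↥C.bd ≃ₜ ↥D.bd) :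
    (↥C.carrier ⊕ ↥D.carrier) → (↥C.carrier ⊕ ↥D.carrier) → Prop := fun a b =>
  a = b ∨ ∃ x : ↥C.bd,
    (a = Sum.inl ⟨(x : Amb n), C.bd_subset_carrier x.2⟩ ∧
      b = Sum.inr ⟨((θ x : ↥D.bd) : Amb n), D.bd_subset_carrier (θ x).2⟩) ∨
    (b = Sum.inl ⟨(x : Amb n), C.bd_subset_carrier x.2⟩ ∧
      a = Sum.inr ⟨((θ x : ↥D.bd) : Amb n), D.bd_subset_carrier (θ x).2⟩)

/-- The sewing space `C ∪_θ D`. -/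
def Sewing {n : ℕ} (C D : CrumpledCube n) (θ : ↥C.bd ≃ₜ ↥D.bd) : Type _ :=
  Quot (SewRel C D θ)

instance {n : ℕ} (C D : CrumpledCube n) (θ : ↥C.bd ≃ₜ ↥D.bd) :
    TopologicalSpace (Sewing C D θ) :=
  inferInstanceAs (TopologicalSpace (Quot (SewRel C D θ)))


section Lip
open Metric Set
open scoped NNReal

variable {α β γ : Type*} [PseudoMetricSpace α] [PseudoMetricSpace β] [PseudoMetricSpace γ]
variable {E F : Type*} [NormedAddCommGroup E] [NormedAddCommGroup F]

/-- Lipschitz with a real (unbundled) constant. -/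
def LipFun (f : α → β) : Prop := ∃ K : ℝ, 0 ≤ K ∧ ∀ x y, dist (f x) (f y) ≤ K * dist x y

theorem LipFun.of_lipschitzWith {f : α → β} (K : ℝ≥0) (h : LipschitzWith K f) : LipFun f :=
  ⟨K, K.2, fun x y => h.dist_le_mul x y⟩

theorem LipFun.toLip {f : α → β} (h : LipFun f) : ∃ K : ℝ≥0, LipschitzWith K f := by
  obtain ⟨K, hK0, hK⟩ := h
  exact ⟨⟨K, hK0⟩, LipschitzWith.of_dist_le_mul hK⟩

theorem LipFun.continuous {f : α → β} (h : LipFun f) : Continuous f := by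
  obtain ⟨K, hK⟩ := h.toLip; exact hK.continuous

theorem lipfun_const (b : β) : LipFun (fun _ : α => b) :=
  ⟨0, le_refl _, fun x y => by simp⟩

theorem LipFun.comp {f : β → γ} {g : α → β} (hf : LipFun f) (hg : LipFun g) :
    LipFun fun x => f (g x) := by
  obtain ⟨Kf, hKf0, hKf⟩ := hf
  obtain ⟨Kg, hKg0, hKg⟩ := hg
  refine ⟨Kf * Kg, by positivity, fun x y => ?_⟩
  calc dist (f (g x)) (f (g y)) ≤ Kf * dist (g x) (g y) := hKf _ _
    _ ≤ Kf * (Kg * dist x y) := by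
        have := hKg x y; nlinarith [dist_nonneg (x := g x) (y := g y)]
    _ = Kf * Kg * dist x y := by ring

theorem lipfun_eval {ι : Type*} [Fintype ι] (i : ι) : LipFun (fun z : ι → ℝ => z i) :=
  ⟨1, zero_le_one, fun x y => by simpa using dist_le_pi_dist x y i⟩

theorem LipFun.pair {f : α → β} {g : α → γ} (hf : LipFun f) (hg : LipFun g) :
    LipFun fun x => (f x, g x) := by
  obtain ⟨Kf, hKf0, hKf⟩ := hf
  obtain ⟨Kg, hKg0, hKg⟩ := hg
  refine ⟨Kf + Kg, by positivity, fun x y => ?_⟩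
  rw [Prod.dist_eq]
  have d0 := dist_nonneg (x := x) (y := y)
  refine max_le ?_ ?_
  · have := hKf x y; nlinarith
  · have := hKg x y; nlinarith

theorem LipFun.sub {f g : α → E} (hf : LipFun f) (hg : LipFun g) :
    LipFun fun x => f x - g x := by
  obtain ⟨Kf, hKf0, hKf⟩ := hf
  obtain ⟨Kg, hKg0, hKg⟩ := hg
  refine ⟨Kf + Kg, by positivity, fun x y => ?_⟩
  calc dist (f x - g x) (f y - g y) ≤ dist (f x) (f y) + dist (g x) (g y) := dist_sub_sub_le _ _ _ _
    _ ≤ Kf * dist x y + Kg * dist x y := add_le_add (hKf x y) (hKg x y)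
    _ = (Kf + Kg) * dist x y := by ring

theorem LipFun.addConst {f : α → E} (hf : LipFun f) (v : E) :
    LipFun fun x => f x + v := by
  obtain ⟨Kf, hKf0, hKf⟩ := hf
  exact ⟨Kf, hKf0, fun x y => by simpa [dist_add_right] using hKf x y⟩

theorem LipFun.addFun {f g : α → E} (hf : LipFun f) (hg : LipFun g) :
    LipFun fun x => f x + g x := by
  obtain ⟨Kf, hKf0, hKf⟩ := hf
  obtain ⟨Kg, hKg0, hKg⟩ := hg
  refine ⟨Kf + Kg, by positivity, fun x y => ?_⟩
  calc dist (f x + g x) (f y + g y) ≤ dist (f x) (f y) + dist (g x) (g y) :=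
        dist_add_add_le _ _ _ _
    _ ≤ Kf * dist x y + Kg * dist x y := add_le_add (hKf x y) (hKg x y)
    _ = (Kf + Kg) * dist x y := by ring

theorem LipFun.smulFun {𝕜 : Type*} [NormedField 𝕜] [NormedSpace 𝕜 E]
    {τ : α → 𝕜} {w : α → E} {Cτ Cw : ℝ} (hτ : LipFun τ) (hw : LipFun w)
    (hCτ : 0 ≤ Cτ) (hCw : 0 ≤ Cw) (hbτ : ∀ x, ‖τ x‖ ≤ Cτ) (hbw : ∀ x, ‖w x‖ ≤ Cw) :
    LipFun fun x => τ x • w x := by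
  obtain ⟨Kτ, hKτ0, hKτ⟩ := hτ
  obtain ⟨Kw, hKw0, hKw⟩ := hw
  refine ⟨Cτ * Kw + Cw * Kτ, by positivity, fun x y => ?_⟩
  have h1 : dist (τ x • w x) (τ y • w y) ≤ ‖τ x‖ * ‖w x - w y‖ + ‖τ x - τ y‖ * ‖w y‖ := by
    rw [dist_eq_norm]
    calc ‖τ x • w x - τ y • w y‖ = ‖τ x • (w x - w y) + (τ x - τ y) • w y‖ := by
          congr 1; rw [smul_sub, sub_smul]; abel
      _ ≤ ‖τ x • (w x - w y)‖ + ‖(τ x - τ y) • w y‖ := norm_add_le _ _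
      _ = ‖τ x‖ * ‖w x - w y‖ + ‖τ x - τ y‖ * ‖w y‖ := by rw [norm_smul, norm_smul]
  have h2 : ‖w x - w y‖ ≤ Kw * dist x y := by rw [← dist_eq_norm]; exact hKw x y
  have h3 : ‖τ x - τ y‖ ≤ Kτ * dist x y := by rw [← dist_eq_norm]; exact hKτ x y
  have h4 : ‖τ x‖ ≤ Cτ := hbτ x
  have h5 : ‖w y‖ ≤ Cw := hbw y
  have d0 := dist_nonneg (x := x) (y := y)
  nlinarith [norm_nonneg (τ x), norm_nonneg (w y), norm_nonneg (w x - w y), norm_nonneg (τ x - τ y)]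

theorem lipfun_val {s : Set E} : LipFun (fun x : ↥s => (x : E)) :=
  ⟨1, zero_le_one, fun x y => by rw [Subtype.dist_eq]; simp⟩

/-- Normalization sends to the unit sphere. -/
theorem nrm_norm {u : E} [NormedSpace ℝ E] (hu : ‖u‖ ≠ 0) : ‖‖u‖⁻¹ • u‖ = 1 := by
  rw [norm_smul, norm_inv, norm_norm, inv_mul_cancel₀ hu]

theorem nrm_factor {u : E} [NormedSpace ℝ E] (hu : ‖u‖ ≠ 0) : u = ‖u‖ • (‖u‖⁻¹ • u) := by
  rw [smul_smul, mul_inv_cancel₀ hu, one_smul]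

theorem nrm_close {u p : E} [NormedSpace ℝ E] {ρ : ℝ} (hp : ‖p‖ = 1) (hρ : ‖u - p‖ ≤ ρ)
    (hu : (1:ℝ)/2 ≤ ‖u‖) : ‖‖u‖⁻¹ • u - p‖ ≤ 2 * ρ := by
  have hu0 : (0:ℝ) < ‖u‖ := by linarith
  have h1 : ‖‖u‖⁻¹ • u - u‖ = |1 - ‖u‖| := by
    have : ‖u‖⁻¹ • u - u = (‖u‖⁻¹ - 1) • u := by rw [sub_smul, one_smul]
    rw [this, norm_smul, Real.norm_eq_abs]
    rw [abs_sub_comm, show (1:ℝ) - ‖u‖⁻¹ = (‖u‖ - 1) * ‖u‖⁻¹ by field_simp, abs_mul,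
      abs_of_pos (inv_pos.2 hu0)]
    rw [mul_assoc, inv_mul_cancel₀ (ne_of_gt hu0), mul_one, abs_sub_comm]
  have h2 : |1 - ‖u‖| ≤ ‖u - p‖ := by
    have := abs_norm_sub_norm_le u p
    rw [hp] at this
    rw [abs_sub_comm]
    simpa [abs_sub_comm] using this
  calc ‖‖u‖⁻¹ • u - p‖ ≤ ‖‖u‖⁻¹ • u - u‖ + ‖u - p‖ := by
        have := norm_add_le (‖u‖⁻¹ • u - u) (u - p); simpa using this
    _ ≤ |1 - ‖u‖| + ρ := by rw [h1]; linarith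
    _ ≤ ρ + ρ := by have := le_trans h2 hρ; linarith
    _ = 2 * ρ := by ring

theorem nrm_lip {a b : E} [NormedSpace ℝ E] (ha : (1:ℝ)/2 ≤ ‖a‖) (hb : (1:ℝ)/2 ≤ ‖b‖) :
    ‖‖a‖⁻¹ • a - ‖b‖⁻¹ • b‖ ≤ 4 * ‖a - b‖ := by
  have ha0 : (0:ℝ) < ‖a‖ := by linarith
  have hb0 : (0:ℝ) < ‖b‖ := by linarith
  have key : ‖a‖⁻¹ • a - ‖b‖⁻¹ • b = ‖a‖⁻¹ • (a - b) + (‖a‖⁻¹ - ‖b‖⁻¹) • b := by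
    rw [smul_sub, sub_smul]; abel
  rw [key]
  have h1 : ‖‖a‖⁻¹ • (a - b)‖ ≤ 2 * ‖a - b‖ := by
    rw [norm_smul, norm_inv, norm_norm]
    have : ‖a‖⁻¹ ≤ 2 := by
      rw [inv_le_comm₀ (by linarith) (by norm_num)]; linarith
    nlinarith [norm_nonneg (a - b)]
  have h2 : ‖(‖a‖⁻¹ - ‖b‖⁻¹) • b‖ ≤ 2 * ‖a - b‖ := by
    have e1 : ‖a‖⁻¹ - ‖b‖⁻¹ = (‖b‖ - ‖a‖) * ‖a‖⁻¹ * ‖b‖⁻¹ := by field_simp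
    rw [norm_smul, Real.norm_eq_abs, e1, abs_mul, abs_mul, abs_of_pos (inv_pos.2 ha0),
      abs_of_pos (inv_pos.2 hb0)]
    have h3 : |‖b‖ - ‖a‖| ≤ ‖a - b‖ := by
      have := abs_norm_sub_norm_le b a
      simpa [norm_sub_rev] using this
    have hbb : ‖b‖⁻¹ * ‖b‖ = 1 := inv_mul_cancel₀ (ne_of_gt hb0)
    have e2 : |‖b‖ - ‖a‖| * ‖a‖⁻¹ * ‖b‖⁻¹ * ‖b‖ = |‖b‖ - ‖a‖| * ‖a‖⁻¹ := by
      rw [mul_assoc, hbb, mul_one]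
    rw [e2]
    have i1 : ‖a‖⁻¹ ≤ 2 := by
      rw [inv_le_comm₀ (by linarith) (by norm_num)]; linarith
    nlinarith [abs_nonneg (‖b‖ - ‖a‖), inv_pos.2 ha0, norm_nonneg (a - b)]
  calc ‖‖a‖⁻¹ • (a - b) + (‖a‖⁻¹ - ‖b‖⁻¹) • b‖ ≤ ‖‖a‖⁻¹ • (a - b)‖ + ‖(‖a‖⁻¹ - ‖b‖⁻¹) • b‖ :=
        norm_add_le _ _
    _ ≤ 4 * ‖a - b‖ := by linarith

end Lip

section SW
open Metric Set unitInterval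
open scoped NNReal

/-- The two coordinate functions on `I × I`. -/
noncomputable def coordFst : C(I × I, ℝ) :=
  ⟨fun x => (x.1 : ℝ), continuous_subtype_val.comp continuous_fst⟩

noncomputable def coordSnd : C(I × I, ℝ) :=
  ⟨fun x => (x.2 : ℝ), continuous_subtype_val.comp continuous_snd⟩

theorem lipfun_coordFst : LipFun ⇑coordFst := by
  refine ⟨1, zero_le_one, fun x y => ?_⟩
  have h1 : dist (coordFst x) (coordFst y) = dist x.1 y.1 := (Subtype.dist_eq x.1 y.1).symm
  rw [h1, one_mul, Prod.dist_eq]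
  exact le_max_left _ _

theorem lipfun_coordSnd : LipFun ⇑coordSnd := by
  refine ⟨1, zero_le_one, fun x y => ?_⟩
  have h1 : dist (coordSnd x) (coordSnd y) = dist x.2 y.2 := (Subtype.dist_eq x.2 y.2).symm
  rw [h1, one_mul, Prod.dist_eq]
  exact le_max_right _ _

theorem lipfun_of_mem_adjoin {a : C(I × I, ℝ)}
    (ha : a ∈ Algebra.adjoin ℝ ({coordFst, coordSnd} : Set C(I × I, ℝ))) : LipFun ⇑a := by
  induction ha using Algebra.adjoin_induction with
  | mem x hx =>
      rcases hx with h | h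
      · subst h; exact lipfun_coordFst
      · rw [Set.mem_singleton_iff] at h; subst h; exact lipfun_coordSnd
  | algebraMap r =>
      have : ⇑(algebraMap ℝ C(I × I, ℝ) r) = fun _ => r := by
        ext x; simp [Algebra.algebraMap_eq_smul_one]
      rw [this]; exact lipfun_const r
  | add x y hx hy ihx ihy =>
      have : ⇑(x + y) = fun t => x t + y t := rfl
      rw [this]; exact ihx.addFun ihy
  | mul x y hx hy ihx ihy =>
      have he : ⇑(x * y) = fun t => (x t) • (y t) := by
        ext t; simp [smul_eq_mul]
      rw [he]
      exact ihx.smulFun ihy (norm_nonneg x) (norm_nonneg y)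
        (fun t => by simpa [Real.norm_eq_abs] using x.norm_coe_le_norm t)
        (fun t => by simpa [Real.norm_eq_abs] using y.norm_coe_le_norm t)

/-- Real-valued continuous functions on `I × I` can be approximated by Lipschitz elements. -/
theorem coord_dense (φ : C(I × I, ℝ)) {δ : ℝ} (hδ : 0 < δ) :
    ∃ a : C(I × I, ℝ), LipFun ⇑a ∧ ∀ x, dist (a x) (φ x) < δ := by
  set A := Algebra.adjoin ℝ ({coordFst, coordSnd} : Set C(I × I, ℝ)) with hA
  have hsep : A.SeparatesPoints := by
    rintro x y hxy
    by_cases h1 : x.1 = y.1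
    · have h2 : x.2 ≠ y.2 := fun h2 => hxy (Prod.ext h1 h2)
      refine ⟨⇑coordSnd, ⟨coordSnd, Algebra.subset_adjoin (by simp), rfl⟩, ?_⟩
      exact fun h => h2 (Subtype.ext h)
    · refine ⟨⇑coordFst, ⟨coordFst, Algebra.subset_adjoin (by simp), rfl⟩, ?_⟩
      exact fun h => h1 (Subtype.ext h)
  have htop := ContinuousMap.subalgebra_topologicalClosure_eq_top_of_separatesPoints A hsep
  have hmem : φ ∈ closure (A : Set C(I × I, ℝ)) := by
    have h1 : φ ∈ A.topologicalClosure := by rw [htop]; trivial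
    rw [← Subalgebra.topologicalClosure_coe]
    exact (SetLike.mem_coe).2 h1
  obtain ⟨b, hbA, hbd⟩ := Metric.mem_closure_iff.1 hmem δ hδ
  refine ⟨b, lipfun_of_mem_adjoin hbA, fun x => ?_⟩
  calc dist (b x) (φ x) ≤ dist b φ := ContinuousMap.dist_apply_le_dist x
    _ < δ := by rwa [dist_comm] at hbd

/-- Lipschitz maps are uniformly dense among continuous maps `I × I → ℝ^{n+1}`. -/
theorem lip_dense (n : ℕ) (p : C(I × I, Amb n)) {δ : ℝ} (hδ : 0 < δ) :
    ∃ q : I × I → Amb n, LipFun q ∧ ∀ x, ‖q x - p x‖ < δ := by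
  classical
  obtain ⟨Kc, hCanti⟩ : ∃ K : ℝ≥0, AntilipschitzWith K ⇑(WithLp.equiv 2 (∀ _ : Fin (n+1), ℝ)) :=
    ⟨_, PiLp.antilipschitzWith_ofLp 2 _⟩
  set δ' : ℝ := δ / ((Kc : ℝ) + 1) with hδ'
  have hδ'0 : 0 < δ' := by positivity
  have hcoord : ∀ j : Fin (n+1), ∃ a : C(I × I, ℝ), LipFun ⇑a ∧
      ∀ x, dist (a x) (p x j) < δ' := by
    intro j
    have hcont : Continuous fun x : I × I => p x j :=
      (continuous_apply j).comp ((PiLp.continuous_ofLp 2 _).comp p.continuous)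
    exact coord_dense ⟨fun x => p x j, hcont⟩ hδ'0
  choose a ha₁ ha₂ using hcoord
  set qPi : I × I → (Fin (n+1) → ℝ) := fun x j => a j x with hqPi
  have hqPiLip : LipFun qPi := by
    have h := fun j => ha₁ j
    choose K hK0 hK using h
    refine ⟨∑ j, K j, Finset.sum_nonneg fun j _ => hK0 j, fun x y => ?_⟩
    have hs : ∀ j, K j ≤ ∑ j', K j' := fun j =>
      Finset.single_le_sum (fun j' _ => hK0 j') (Finset.mem_univ j)
    refine (dist_pi_le_iff (mul_nonneg (Finset.sum_nonneg fun j _ => hK0 j) dist_nonneg)).2 fun j => ?_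
    calc dist (qPi x j) (qPi y j) ≤ K j * dist x y := hK j x y
      _ ≤ (∑ j', K j') * dist x y := by
          have := hs j; nlinarith [dist_nonneg (x := x) (y := y)]
  have hlipSymm : LipFun ⇑(WithLp.equiv 2 (∀ _ : Fin (n+1), ℝ)).symm :=
    LipFun.of_lipschitzWith _ (hCanti.to_rightInverse (Equiv.apply_symm_apply _))
  refine ⟨fun x => (WithLp.equiv 2 _).symm (qPi x), hlipSymm.comp hqPiLip, fun x => ?_⟩
  have key : dist ((WithLp.equiv 2 (∀ _ : Fin (n+1), ℝ)).symm (qPi x)) (p x) ≤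
      (Kc : ℝ) * dist (qPi x) (WithLp.equiv 2 _ (p x)) := by
    have h1 := hCanti.le_mul_dist ((WithLp.equiv 2 (∀ _ : Fin (n+1), ℝ)).symm (qPi x)) (p x)
    simpa [Equiv.apply_symm_apply] using h1
  have hpi : dist (qPi x) (WithLp.equiv 2 (∀ _ : Fin (n+1), ℝ) (p x)) ≤ δ' := by
    refine (dist_pi_le_iff (le_of_lt hδ'0)).2 fun j => ?_
    have := ha₂ j x
    change dist (qPi x j) ((p x).ofLp j) ≤ δ'
    exact le_of_lt this
  rw [← dist_eq_norm]
  calc dist ((WithLp.equiv 2 _).symm (qPi x)) (p x) ≤ (Kc : ℝ) * δ' := by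
        refine le_trans key ?_
        have : (0:ℝ) ≤ (Kc : ℝ) := Kc.2
        nlinarith [dist_nonneg (x := qPi x) (y := WithLp.equiv 2 (∀ _ : Fin (n+1), ℝ) (p x))]
    _ < ((Kc : ℝ) + 1) * δ' := by nlinarith
    _ = δ := by rw [hδ']; field_simp
end SW

section Avoid
open Metric Set unitInterval MeasureTheory
open scoped NNReal ENNReal

theorem avoid (n : ℕ) (hn : 5 ≤ n) (q : I × I → Amb n) (hq : LipFun q)
    (N : ℕ) (w : Fin N → (I × I → Amb n)) (hwl : ∀ i, LipFun (w i))
    (hw1 : ∀ i x, ‖w i x‖ = 1) {η : ℝ} (hη : 0 < η) :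
    ∃ v : Amb n, ‖v‖ < η ∧ ∀ (i : Fin N) (x x' : I × I) (t : ℝ),
      1/2 ≤ t → t ≤ 3 → q x + v ≠ t • w i x' := by
  classical
  -- clamps
  set clI : ℝ → I := Set.projIcc 0 1 zero_le_one with hclIdef
  have hclI : LipFun clI := LipFun.of_lipschitzWith 1 (LipschitzWith.projIcc _)
  have h123 : (1/2 : ℝ) ≤ 3 := by norm_num
  set clT : ℝ → ℝ := fun s => ((Set.projIcc (1/2 : ℝ) 3 h123 s : Set.Icc (1/2:ℝ) 3) : ℝ)
    with hclTdef
  have hclT : LipFun clT :=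
    (lipfun_val (E := ℝ) (s := Set.Icc (1/2:ℝ) 3)).comp
      (LipFun.of_lipschitzWith 1 (LipschitzWith.projIcc _))
  have hclTb : ∀ s, 1/2 ≤ clT s ∧ clT s ≤ 3 := fun s =>
    ⟨(Set.projIcc (1/2 : ℝ) 3 h123 s).2.1, (Set.projIcc (1/2 : ℝ) 3 h123 s).2.2⟩
  -- parametrizations
  set pr1 : (Fin 5 → ℝ) → I × I := fun z => (clI (z 0), clI (z 1)) with hpr1def
  set pr2 : (Fin 5 → ℝ) → I × I := fun z => (clI (z 2), clI (z 3)) with hpr2def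
  have hpr1 : LipFun pr1 := (hclI.comp (lipfun_eval 0)).pair (hclI.comp (lipfun_eval 1))
  have hpr2 : LipFun pr2 := (hclI.comp (lipfun_eval 2)).pair (hclI.comp (lipfun_eval 3))
  set ψ : Fin N → (Fin 5 → ℝ) → Amb n := fun i z => clT (z 4) • w i (pr2 z) - q (pr1 z)
    with hψdef
  have hψ : ∀ i, LipFun (ψ i) := by
    intro i
    refine LipFun.sub ?_ (hq.comp hpr1)
    refine LipFun.smulFun (Cτ := 3) (Cw := 1) (hclT.comp (lipfun_eval 4)) ((hwl i).comp hpr2)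
      (by norm_num) zero_le_one ?_ ?_
    · intro z
      have := hclTb (z 4)
      rw [Real.norm_eq_abs, abs_le]
      constructor <;> linarith [this.1, this.2]
    · intro z; rw [hw1]
  set eQ := WithLp.equiv 2 (∀ _ : Fin (n+1), ℝ) with heQdef
  have heQ : LipFun ⇑eQ := LipFun.of_lipschitzWith 1 (PiLp.lipschitzWith_ofLp 2 _)
  set Φ : Fin N → (Fin 5 → ℝ) → (Fin (n+1) → ℝ) := fun i z => eQ (ψ i z) with hΦdef
  have hΦ : ∀ i, LipFun (Φ i) := fun i => heQ.comp (hψ i)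
  -- Hausdorff measure of dimension n+1 vanishes on ℝ⁵
  have hlt : (5:ℝ) < (n:ℝ) + 1 := by
    have : (5:ℝ) ≤ (n:ℝ) := by exact_mod_cast hn
    linarith
  have h5vol : (μH[(5:ℝ)] : Measure (Fin 5 → ℝ)) = volume := by
    have := hausdorffMeasure_pi_real (ι := Fin 5)
    simpa using this
  have hP5 : (μH[((n:ℝ)+1)] : Measure (Fin 5 → ℝ)) univ = 0 := by
    have hcb : ∀ k : ℕ, (μH[((n:ℝ)+1)] : Measure (Fin 5 → ℝ)) (closedBall 0 k) = 0 := by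
      intro k
      rcases Measure.hausdorffMeasure_zero_or_top hlt (closedBall (0 : Fin 5 → ℝ) k) with h | h
      · exact h
      · exfalso
        have h5 : (μH[(5:ℝ)] : Measure (Fin 5 → ℝ)) (closedBall 0 k) < ⊤ := by
          rw [h5vol]; exact measure_closedBall_lt_top
        rw [h] at h5; exact absurd h5 (by simp)
    have hU : (univ : Set (Fin 5 → ℝ)) ⊆ ⋃ k : ℕ, closedBall 0 k := by
      intro z _
      obtain ⟨k, hk⟩ := exists_nat_ge ‖z‖
      exact mem_iUnion.2 ⟨k, by simpa [dist_zero_right] using hk⟩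
    have h2 : (μH[((n:ℝ)+1)] : Measure (Fin 5 → ℝ)) (⋃ k : ℕ, closedBall 0 k) = 0 := by
      refine le_antisymm (le_trans (measure_iUnion_le _) ?_) zero_le
      simp [hcb]
    exact le_antisymm (le_trans (measure_mono hU) (le_of_eq h2)) zero_le
  have hnvol : (μH[((n:ℝ)+1)] : Measure (Fin (n+1) → ℝ)) = volume := by
    have := hausdorffMeasure_pi_real (ι := Fin (n+1))
    have hc : ((Fintype.card (Fin (n+1)) : ℝ)) = (n:ℝ)+1 := by simp
    rwa [hc] at this
  have hΦ0 : ∀ i, (volume : Measure (Fin (n+1) → ℝ)) (Set.range (Φ i)) = 0 := by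
    intro i
    obtain ⟨K, hK⟩ := (hΦ i).toLip
    have him := hK.hausdorffMeasure_image_le (d := (n:ℝ)+1) (by positivity) univ
    rw [Set.image_univ, hP5, mul_zero] at him
    rw [← hnvol]
    exact le_antisymm him zero_le
  set Bad := ⋃ i : Fin N, Set.range (Φ i) with hBaddef
  have hBad : (volume : Measure (Fin (n+1) → ℝ)) Bad = 0 :=
    le_antisymm (le_trans (measure_iUnion_le _) (by simp [hΦ0])) zero_le
  obtain ⟨Ka, hKa⟩ : ∃ K : ℝ≥0, AntilipschitzWith K ⇑eQ := ⟨_, PiLp.antilipschitzWith_ofLp 2 _⟩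
  set η2 : ℝ := η / ((Ka:ℝ)+1) with hη2def
  have hη2 : 0 < η2 := by positivity
  have hballpos : 0 < (volume : Measure (Fin (n+1) → ℝ)) (ball 0 η2) :=
    measure_ball_pos _ _ hη2
  have hnotsub : ¬ (ball (0 : Fin (n+1) → ℝ) η2 ⊆ Bad) := by
    intro hsub
    have := measure_mono (μ := (volume : Measure (Fin (n+1) → ℝ))) hsub
    rw [hBad] at this
    exact absurd (lt_of_lt_of_le hballpos this) (lt_irrefl 0)
  obtain ⟨v', hv'ball, hv'Bad⟩ := Set.not_subset.1 hnotsub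
  set v : Amb n := eQ.symm v' with hvdef
  have heQv : eQ v = v' := Equiv.apply_symm_apply _ _
  have hvn : ‖v‖ < η := by
    have h1 : dist v 0 ≤ (Ka : ℝ) * dist (eQ v) (eQ 0) := hKa.le_mul_dist v 0
    have h2 : eQ (0 : Amb n) = 0 := rfl
    rw [heQv, h2] at h1
    have h3 : dist v' (0 : Fin (n+1) → ℝ) < η2 := by simpa [dist_zero_right] using mem_ball.1 hv'ball
    have h4 : (0:ℝ) ≤ (Ka:ℝ) := Ka.2
    have h5 : dist v (0 : Amb n) < ((Ka:ℝ)+1) * η2 := by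
      nlinarith [dist_nonneg (x := v') (y := (0 : Fin (n+1) → ℝ))]
    have h6 : ((Ka:ℝ)+1) * η2 = η := by rw [hη2def]; field_simp
    rw [dist_zero_right] at h5
    linarith [h5, le_of_eq h6]
  refine ⟨v, hvn, ?_⟩
  intro i x x' t ht1 ht3 heq
  have hv : v = t • w i x' - q x := by rw [← heq]; abel
  set z : Fin 5 → ℝ := Fin.cons ((x.1 : ℝ)) (Fin.cons ((x.2 : ℝ)) (Fin.cons ((x'.1 : ℝ))
    (Fin.cons ((x'.2 : ℝ)) (fun _ => t)))) with hzdef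
  have hz0 : z 0 = (x.1 : ℝ) := rfl
  have hz1 : z 1 = (x.2 : ℝ) := rfl
  have hz2 : z 2 = (x'.1 : ℝ) := rfl
  have hz3 : z 3 = (x'.2 : ℝ) := rfl
  have hz4 : z 4 = t := rfl
  have hclIx : ∀ u : I, clI (u : ℝ) = u := by
    intro u
    rw [hclIdef, Set.projIcc_of_mem _ u.2]
  have hpr1z : pr1 z = x := by
    rw [hpr1def]
    simp only [hz0, hz1, hclIx]
  have hpr2z : pr2 z = x' := by
    rw [hpr2def]
    simp only [hz2, hz3, hclIx]
  have hclTt : clT t = t := by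
    rw [hclTdef]
    simp only
    rw [Set.projIcc_of_mem h123 ⟨ht1, ht3⟩]
  have hψz : ψ i z = v := by
    rw [hψdef]
    simp only
    rw [hz4, hclTt, hpr1z, hpr2z, hv]
  apply hv'Bad
  refine mem_iUnion.2 ⟨i, ⟨z, ?_⟩⟩
  rw [hΦdef]
  simp only
  rw [hψz, heQv]
end Avoid

section Stage
open Metric Set unitInterval
open scoped NNReal

/-- A sphere map is "nice" when its ambient realization is Lipschitz. -/
def NiceMap (n : ℕ) (ν : C(I × I, ↥(Sph n))) : Prop :=
  LipFun (fun x => ((ν x : ↥(Sph n)) : Amb n))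

theorem sph_norm {n : ℕ} (z : ↥(Sph n)) : ‖(z : Amb n)‖ = 1 :=
  mem_sphere_zero_iff_norm.mp z.2

theorem sph_mk {n : ℕ} {a : Amb n} (ha : ‖a‖ = 1) : a ∈ Sph n :=
  mem_sphere_zero_iff_norm.mpr ha

theorem stage_exists (n : ℕ) (hn : 5 ≤ n) (p₀ : C(I × I, ↥(Sph n))) {ε : ℝ} (hε : 0 < ε)
    (L : List C(I × I, ↥(Sph n))) (hL : ∀ ν ∈ L, NiceMap n ν) :
    ∃ st : C(I × I, ↥(Sph n)), NiceMap n st ∧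
      (∀ x, dist (st x) (p₀ x) < ε) ∧ ∀ ν ∈ L, ∀ x x', st x ≠ ν x' := by
  classical
  set δ : ℝ := min ε 1 / 8 with hδdef
  have hδ0 : 0 < δ := by
    have : 0 < min ε 1 := lt_min hε one_pos
    positivity
  have hδ1 : δ ≤ 1 / 8 := by
    have : min ε 1 ≤ 1 := min_le_right _ _
    rw [hδdef]; linarith
  have hδε : 4 * δ < ε := by
    have h1 : min ε 1 ≤ ε := min_le_left _ _
    have h2 : 0 < min ε 1 := lt_min hε one_pos
    rw [hδdef]; linarith
  set pAmb : C(I × I, Amb n) :=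
    ⟨fun x => (p₀ x : Amb n), continuous_subtype_val.comp p₀.continuous⟩ with hpAmb
  obtain ⟨q, hqLip, hqd⟩ := lip_dense n pAmb hδ0
  set w : Fin L.length → (I × I → Amb n) := fun i => fun x => ((L.get i) x : Amb n) with hwdef
  have hwl : ∀ i, LipFun (w i) := fun i => hL _ (List.get_mem L i)
  have hw1 : ∀ i x, ‖w i x‖ = 1 := fun i x => sph_norm _
  obtain ⟨v, hvn, hva⟩ := avoid n hn q hqLip L.length w hwl hw1 hδ0
  set u : I × I → Amb n := fun x => q x + v with hudef
  have hup : ∀ x, ‖u x - p₀ x‖ ≤ 2 * δ := by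
    intro x
    have h1 : u x - (p₀ x : Amb n) = (q x - pAmb x) + v := by
      simp only [hudef, hpAmb, ContinuousMap.coe_mk]; abel
    rw [h1]
    calc ‖(q x - pAmb x) + v‖ ≤ ‖q x - pAmb x‖ + ‖v‖ := norm_add_le _ _
      _ ≤ 2 * δ := by have := hqd x; linarith [le_of_lt hvn]
  have hul : ∀ x, 1/2 ≤ ‖u x‖ := by
    intro x
    have h2 : |‖(p₀ x : Amb n)‖ - ‖u x‖| ≤ ‖u x - (p₀ x : Amb n)‖ := by
      rw [abs_sub_comm]; exact abs_norm_sub_norm_le (u x) _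
    have h3 := le_trans (le_abs_self _) (le_trans h2 (hup x))
    rw [sph_norm] at h3
    linarith
  have huu : ∀ x, ‖u x‖ ≤ 3 := by
    intro x
    have h2 : |‖u x‖ - ‖(p₀ x : Amb n)‖| ≤ ‖u x - (p₀ x : Amb n)‖ := abs_norm_sub_norm_le _ _
    have h3 := le_trans (le_abs_self _) (le_trans h2 (hup x))
    rw [sph_norm] at h3
    linarith
  have hune : ∀ x, ‖u x‖ ≠ 0 := fun x =>
    (lt_of_lt_of_le (by norm_num : (0:ℝ) < 1/2) (hul x)).ne'
  have hucont : Continuous u := by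
    have := hqLip.continuous
    exact this.add continuous_const
  set stf : I × I → ↥(Sph n) := fun x => ⟨‖u x‖⁻¹ • u x, sph_mk (nrm_norm (hune x))⟩ with hstf
  have hstc : Continuous stf := by
    refine Continuous.subtype_mk ?_ _
    exact (hucont.norm.inv₀ hune).smul hucont
  refine ⟨⟨stf, hstc⟩, ?_, ?_, ?_⟩
  · obtain ⟨Kq, hKq0, hKq⟩ := hqLip
    refine ⟨4 * Kq, by positivity, fun x y => ?_⟩
    show dist ((stf x : Amb n)) ((stf y : Amb n)) ≤ 4 * Kq * dist x y
    rw [dist_eq_norm]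
    have h2 : ‖u x - u y‖ = ‖q x - q y‖ := by
      have he : u x - u y = q x - q y := by simp only [hudef]; abel
      rw [he]
    calc ‖(stf x : Amb n) - (stf y : Amb n)‖ = ‖‖u x‖⁻¹ • u x - ‖u y‖⁻¹ • u y‖ := rfl
      _ ≤ 4 * ‖u x - u y‖ := nrm_lip (hul x) (hul y)
      _ = 4 * ‖q x - q y‖ := by rw [h2]
      _ ≤ 4 * (Kq * dist x y) := by
          have := hKq x y; rw [dist_eq_norm] at this; linarith
      _ = 4 * Kq * dist x y := by ring
  · intro x
    show dist (stf x) (p₀ x) < ε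
    rw [Subtype.dist_eq, dist_eq_norm]
    have h1 : ‖(stf x : Amb n) - (p₀ x : Amb n)‖ ≤ 2 * (2 * δ) :=
      nrm_close (sph_norm (p₀ x)) (hup x) (hul x)
    have h2 : ((stf x : ↥(Sph n)) : Amb n) = (stf x : Amb n) := rfl
    calc ‖((stf x : ↥(Sph n)) : Amb n) - ((p₀ x : ↥(Sph n)) : Amb n)‖ ≤ 2 * (2 * δ) := h1
      _ < ε := by linarith
  · intro m hm x x' heq
    obtain ⟨i, hi⟩ := List.mem_iff_get.1 hm
    subst hi
    have hval : ‖u x‖⁻¹ • u x = w i x' := congrArg Subtype.val heq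
    have hfac : u x = ‖u x‖ • w i x' := by
      rw [← hval]
      exact nrm_factor (hune x)
    exact hva i x x' ‖u x‖ (hul x) (huu x) hfac

end Stage

section DisjointGood
open Metric Set unitInterval TopologicalSpace
open scoped NNReal

theorem disjoint_good (n : ℕ) (hn : 5 ≤ n) (Bs : Set ↥(Sph n)) :
    ∃ Ts Ts' : Set ↥(Sph n), Ts ⊆ Bs ∧ Ts' ⊆ Bs ∧ Ts ∩ Ts' = ∅ ∧
      (∀ (μ : C(I × I, ↥(Sph n))) (δ : ℝ), 0 < δ → ∃ μ' : C(I × I, ↥(Sph n)),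
        (∀ x, dist (μ x) (μ' x) < δ) ∧ ∀ x, μ' x ∈ Bs → μ' x ∈ Ts) ∧
      (∀ (μ : C(I × I, ↥(Sph n))) (δ : ℝ), 0 < δ → ∃ μ' : C(I × I, ↥(Sph n)),
        (∀ x, dist (μ x) (μ' x) < δ) ∧ ∀ x, μ' x ∈ Bs → μ' x ∈ Ts') := by
  classical
  haveI hcs : CompactSpace ↥(Sph n) :=
    isCompact_iff_compactSpace.mp (isCompact_sphere (0 : Amb n) 1)
  have hpt : ∃ z : ↥(Sph n), True := by
    refine ⟨⟨EuclideanSpace.single (0 : Fin (n+1)) (1:ℝ), sph_mk ?_⟩, trivial⟩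
    rw [EuclideanSpace.norm_single]
    norm_num
  obtain ⟨pt, -⟩ := hpt
  haveI : Nonempty ↥(Sph n) := ⟨pt⟩
  haveI : Nonempty C(I × I, ↥(Sph n)) := ⟨ContinuousMap.const _ pt⟩
  haveI : SeparableSpace C(I × I, ↥(Sph n)) := inferInstance
  set d : ℕ → C(I × I, ↥(Sph n)) := denseSeq C(I × I, ↥(Sph n)) with hd_def
  have hd : DenseRange d := denseRange_denseSeq _
  set tgtI : ℕ → ℕ := fun r => (Nat.unpair (r / 2)).1 with htgtI
  set tgtε : ℕ → ℝ := fun r => 1 / (((Nat.unpair (r / 2)).2 : ℝ) + 1) with htgtε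
  have htgtε0 : ∀ r, 0 < tgtε r := fun r => by rw [htgtε]; positivity
  have hstage : ∀ (r : ℕ) (L : List C(I × I, ↥(Sph n))), (∀ m ∈ L, NiceMap n m) →
      ∃ st, NiceMap n st ∧ (∀ x, dist (st x) (d (tgtI r) x) < tgtε r) ∧
        ∀ m ∈ L, ∀ x x', st x ≠ m x' :=
    fun r L hL => stage_exists n hn (d (tgtI r)) (htgtε0 r) L hL
  set Pk : List C(I × I, ↥(Sph n)) → Prop := fun L => ∀ m ∈ L, NiceMap n m with hPk
  have hnil : Pk [] := by intro m hm; simp at hm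
  set step : ℕ → {L : List C(I × I, ↥(Sph n)) // Pk L} → {L : List C(I × I, ↥(Sph n)) // Pk L} :=
    fun r L => ⟨L.1 ++ [Classical.choose (hstage r L.1 L.2)], by
      intro m hm
      rcases List.mem_append.1 hm with h | h
      · exact L.2 m h
      · rw [List.mem_singleton] at h
        subst h
        exact (Classical.choose_spec (hstage r L.1 L.2)).1⟩ with hstep
  set build : ℕ → {L : List C(I × I, ↥(Sph n)) // Pk L} :=
    fun r => Nat.rec ⟨[], hnil⟩ step r with hbuild
  set ν : ℕ → C(I × I, ↥(Sph n)) :=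
    fun r => Classical.choose (hstage r (build r).1 (build r).2) with hν
  have hbuild_succ : ∀ r, (build (r+1)).1 = (build r).1 ++ [ν r] := fun r => rfl
  have hspec : ∀ r, (∀ x, dist (ν r x) (d (tgtI r) x) < tgtε r) ∧
      ∀ m ∈ (build r).1, ∀ x x', ν r x ≠ m x' := fun r =>
    ⟨(Classical.choose_spec (hstage r (build r).1 (build r).2)).2.1,
     (Classical.choose_spec (hstage r (build r).1 (build r).2)).2.2⟩
  have hmem : ∀ j r, j < r → ν j ∈ (build r).1 := by
    intro j r
    induction r with
    | zero => omega
    | succ r ih =>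
        intro hj
        rw [hbuild_succ]
        rcases Nat.lt_succ_iff_lt_or_eq.1 hj with h | h
        · exact List.mem_append_left _ (ih h)
        · subst h
          exact List.mem_append_right _ (List.mem_singleton_self _)
  have hdisj : ∀ a b, a < b → ∀ x x', ν b x ≠ ν a x' := fun a b hab x x' =>
    (hspec b).2 (ν a) (hmem a b hab) x x'
  set Ts : Set ↥(Sph n) := ⋃ (r : ℕ) (_ : r % 2 = 0), (Set.range ⇑(ν r)) ∩ Bs with hTs
  set Ts' : Set ↥(Sph n) := ⋃ (r : ℕ) (_ : r % 2 = 1), (Set.range ⇑(ν r)) ∩ Bs with hTs'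
  have hsub : Ts ⊆ Bs := by
    rw [hTs]
    exact iUnion₂_subset fun r _ => inter_subset_right
  have hsub' : Ts' ⊆ Bs := by
    rw [hTs']
    exact iUnion₂_subset fun r _ => inter_subset_right
  have hint : Ts ∩ Ts' = ∅ := by
    rw [eq_empty_iff_forall_notMem]
    rintro z ⟨hz, hz'⟩
    rw [hTs] at hz
    rw [hTs'] at hz'
    obtain ⟨r, hr0, ⟨⟨x, hx⟩, -⟩⟩ := by
      simpa only [mem_iUnion, mem_inter_iff] using hz
    obtain ⟨r', hr1, ⟨⟨x', hx'⟩, -⟩⟩ := by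
      simpa only [mem_iUnion, mem_inter_iff] using hz'
    have hne : r ≠ r' := by omega
    rcases lt_or_gt_of_ne hne with h | h
    · exact hdisj r r' h x' x (by rw [hx', hx])
    · exact hdisj r' r h x x' (by rw [hx, hx'])
  have hgood : ∀ (par : ℕ), par < 2 → ∀ (μ : C(I × I, ↥(Sph n))) (δ : ℝ), 0 < δ →
      ∃ r, r % 2 = par ∧ (∀ x, dist (μ x) (ν r x) < δ) := by
    intro par hpar μ δ hδ
    have hδ3 : 0 < δ / 3 := by linarith
    obtain ⟨i, hi⟩ := hd.exists_dist_lt μ hδ3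
    obtain ⟨k, hk⟩ := exists_nat_one_div_lt hδ3
    set r := 2 * Nat.pair i k + par with hr
    have hrmod : r % 2 = par := by omega
    have hrdiv : r / 2 = Nat.pair i k := by omega
    have htI : tgtI r = i := by rw [htgtI]; simp [hrdiv, Nat.unpair_pair]
    have htε : tgtε r = 1 / ((k : ℝ) + 1) := by rw [htgtε]; simp [hrdiv, Nat.unpair_pair]
    refine ⟨r, hrmod, fun x => ?_⟩
    have h1 : dist (μ x) (d i x) ≤ dist μ (d i) := ContinuousMap.dist_apply_le_dist x
    have h2 : dist (ν r x) (d (tgtI r) x) < tgtε r := (hspec r).1 x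
    rw [htI, htε] at h2
    have h3 : dist μ (d i) < δ / 3 := hi
    calc dist (μ x) (ν r x) ≤ dist (μ x) (d i x) + dist (d i x) (ν r x) := dist_triangle _ _ _
      _ < δ / 3 + 1 / ((k : ℝ) + 1) := by
          refine add_lt_add_of_le_of_lt (le_trans h1 (le_of_lt h3)) ?_
          rw [dist_comm]
          exact h2
      _ < δ / 3 + δ / 3 := by linarith
      _ < δ := by linarith
  refine ⟨Ts, Ts', hsub, hsub', hint, ?_, ?_⟩
  · intro μ δ hδ
    obtain ⟨r, hrmod, hrd⟩ := hgood 0 (by norm_num) μ δ hδ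
    refine ⟨ν r, hrd, fun x hx => ?_⟩
    rw [hTs]
    exact mem_iUnion.2 ⟨r, mem_iUnion.2 ⟨hrmod, ⟨⟨x, rfl⟩, hx⟩⟩⟩
  · intro μ δ hδ
    obtain ⟨r, hrmod, hrd⟩ := hgood 1 (by norm_num) μ δ hδ
    refine ⟨ν r, hrd, fun x hx => ?_⟩
    rw [hTs']
    exact mem_iUnion.2 ⟨r, mem_iUnion.2 ⟨hrmod, ⟨⟨x, rfl⟩, hx⟩⟩⟩

end DisjointGood

/-- **Theorem 6.5.** Let `n ≥ 5`. If `(C,D,h) ∈ 𝒲_n` and `C ∪_h D = Sⁿ`, then `D`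
contains disjoint homotopy taming sets. -/
theorem stmt19 (n : ℕ) (hn : 5 ≤ n) (C D : CrumpledCube n) (h : ↥C.bd ≃ₜ ↥D.bd)
    (hW : MemW C D h) (hsew : Nonempty (Sewing C D h ≃ₜ ↥(Sph n))) :
    ∃ T T' : Set (Amb n),
      IsHomotopyTamingSet D T ∧ IsHomotopyTamingSet D T' ∧ T ∩ T' = ∅ := by
  classical
  obtain ⟨f, hfc, hf2, hf3⟩ := hW
  obtain ⟨g⟩ := hsew
  set jD : ↥D.carrier → Sewing C D h := fun dd => Quot.mk _ (Sum.inr dd) with hjD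
  have hjDc : Continuous jD := continuous_quot_mk.comp continuous_inr
  have hwd : ∀ a b, SewRel C D h a b → Sum.elim f id a = Sum.elim f id b := by
    intro a b hab
    have hab2 : a = b ∨ ∃ x : ↥C.bd,
        (a = Sum.inl ⟨(x : Amb n), C.bd_subset_carrier x.2⟩ ∧
          b = Sum.inr ⟨((h x : ↥D.bd) : Amb n), D.bd_subset_carrier (h x).2⟩) ∨
        (b = Sum.inl ⟨(x : Amb n), C.bd_subset_carrier x.2⟩ ∧
          a = Sum.inr ⟨((h x : ↥D.bd) : Amb n), D.bd_subset_carrier (h x).2⟩) := hab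
    rcases hab2 with rfl | ⟨x, ⟨ha, hb⟩ | ⟨hb, ha⟩⟩
    · rfl
    · subst ha; subst hb
      simp only [Sum.elim_inl, Sum.elim_inr, id]
      exact Subtype.ext (hf2 ⟨(x : Amb n), C.bd_subset_carrier x.2⟩ x.2)
    · subst ha; subst hb
      simp only [Sum.elim_inl, Sum.elim_inr, id]
      exact (Subtype.ext (hf2 ⟨(x : Amb n), C.bd_subset_carrier x.2⟩ x.2)).symm
  set q0 : Sewing C D h → ↥D.carrier := Quot.lift (Sum.elim f id) hwd with hq0
  have hq0c : Continuous q0 := continuous_quot_lift _ (hfc.sumElim continuous_id)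
  set r : ↥(Sph n) → ↥D.carrier := fun z => q0 (g.symm z) with hrdef
  have hrc : Continuous r := hq0c.comp g.symm.continuous
  have key1 : ∀ dd : ↥D.carrier, r (g (jD dd)) = dd := by
    intro dd
    show q0 (g.symm (g (jD dd))) = dd
    rw [Homeomorph.symm_apply_apply]
    rfl
  set Bset : Set ↥(Sph n) :=
    Set.range (fun b : ↥D.bd => g (jD ⟨(b : Amb n), D.bd_subset_carrier b.2⟩)) with hBset
  have key2 : ∀ z : ↥(Sph n), ((r z : ↥D.carrier) : Amb n) ∈ D.bd ↔ z ∈ Bset := by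
    intro z
    constructor
    · intro hzbd
      obtain ⟨a, ha⟩ := Quot.exists_rep (g.symm z)
      have hz : z = g (Quot.mk _ a) := by rw [ha, Homeomorph.apply_symm_apply]
      cases a with
      | inr dd =>
          have hrz : r z = dd := by rw [hrdef]; simp only; rw [← ha]; rfl
          rw [hrz] at hzbd
          rw [hBset]
          refine ⟨⟨(dd : Amb n), hzbd⟩, ?_⟩
          rw [hz]
      | inl cc =>
          have hrz : r z = f cc := by rw [hrdef]; simp only; rw [← ha]; rfl
          rw [hrz] at hzbd
          have hcc : (cc : Amb n) ∈ C.bd := (hf3 cc).1 hzbd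
          have hrel : SewRel C D h (Sum.inl cc)
              (Sum.inr ⟨((h ⟨(cc : Amb n), hcc⟩ : ↥D.bd) : Amb n),
                D.bd_subset_carrier (h ⟨(cc : Amb n), hcc⟩).2⟩) := by
            refine Or.inr ⟨⟨(cc : Amb n), hcc⟩, Or.inl ⟨?_, rfl⟩⟩
            exact congrArg Sum.inl (Subtype.ext rfl)
          have hquot : Quot.mk (SewRel C D h) (Sum.inl cc) =
              Quot.mk _ (Sum.inr ⟨((h ⟨(cc : Amb n), hcc⟩ : ↥D.bd) : Amb n),
                D.bd_subset_carrier (h ⟨(cc : Amb n), hcc⟩).2⟩) := Quot.sound hrel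
          rw [hBset]
          refine ⟨h ⟨(cc : Amb n), hcc⟩, ?_⟩
          rw [hz, hquot, hjD]
    · rintro ⟨b, hb⟩
      have hrz : r z = ⟨(b : Amb n), D.bd_subset_carrier b.2⟩ := by
        rw [← hb]; exact key1 _
      rw [hrz]
      exact b.2
  haveI : CompactSpace ↥(Sph n) :=
    isCompact_iff_compactSpace.mp (isCompact_sphere (0 : Amb n) 1)
  have hruc : UniformContinuous r := CompactSpace.uniformContinuous_of_continuous hrc
  obtain ⟨Ts, Ts', hsub, hsub', hint, hgood, hgood'⟩ := disjoint_good n hn Bset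
  set F : ↥(Sph n) → Amb n := fun z => ((r z : ↥D.carrier) : Amb n) with hF
  have main : ∀ Tside : Set ↥(Sph n), Tside ⊆ Bset →
      (∀ (μ : C(I × I, ↥(Sph n))) (δ : ℝ), 0 < δ → ∃ μ' : C(I × I, ↥(Sph n)),
        (∀ x, dist (μ x) (μ' x) < δ) ∧ ∀ x, μ' x ∈ Bset → μ' x ∈ Tside) →
      IsHomotopyTamingSet D (F '' Tside) := by
    intro Tside hTsub happrox
    constructor
    · rintro a ⟨z, hz, rfl⟩
      exact (key2 z).2 (hTsub hz)
    · intro m ε hε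
      obtain ⟨δ, hδ0, hδ⟩ := Metric.uniformContinuous_iff.1 hruc ε hε
      set μ : C(I × I, ↥(Sph n)) :=
        ⟨fun x => g (jD (m x)), (g.continuous.comp hjDc).comp m.continuous⟩ with hμ
      obtain ⟨μ', hclose, htrace⟩ := happrox μ δ hδ0
      refine ⟨⟨fun x => r (μ' x), hrc.comp μ'.continuous⟩, ?_, ?_⟩
      · intro x
        have h1 : m x = r (μ x) := (key1 (m x)).symm
        show dist (m x) (r (μ' x)) < ε
        rw [h1]
        exact hδ (hclose x)
      · intro x
        show ((r (μ' x) : ↥D.carrier) : Amb n) ∈ F '' Tside ∪ D.int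
        rcases (Set.mem_union _ _ _).1 (r (μ' x)).2 with hbd | hint2
        · left
          exact ⟨μ' x, htrace x ((key2 _).1 hbd), rfl⟩
        · right
          exact hint2
  refine ⟨F '' Ts, F '' Ts', main Ts hsub hgood, main Ts' hsub' hgood', ?_⟩
  rw [Set.eq_empty_iff_forall_notMem]
  rintro a ⟨⟨z, hz, hza⟩, ⟨z', hz', hza'⟩⟩
  obtain ⟨b, hb⟩ := hsub hz
  obtain ⟨b', hb'⟩ := hsub' hz'
  have h1 : r z = ⟨(b : Amb n), D.bd_subset_carrier b.2⟩ := by rw [← hb]; exact key1 _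
  have h2 : r z' = ⟨(b' : Amb n), D.bd_subset_carrier b'.2⟩ := by rw [← hb']; exact key1 _
  have hv : ((r z : ↥D.carrier) : Amb n) = ((r z' : ↥D.carrier) : Amb n) := by
    rw [hF] at hza hza'
    simp only at hza hza'
    rw [hza, hza']
  rw [h1, h2] at hv
  have hbb : b = b' := Subtype.ext hv
  have hzz : z = z' := by rw [← hb, ← hb', hbb]
  have : z ∈ Ts ∩ Ts' := ⟨hz, hzz ▸ hz'⟩
  rw [hint] at this
  exact this
end
end
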